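/- arXiv:2004.09762 — 3 statements merged into one kernel-verified Lean document; each statement's English description precedes it below -/
import Mathlib

section
/- Every rectifiable loop c : [0,1] → M admits a δ-approximating loop c̄ : [0,1] → N; moreover c̄ can be chosen to be a concatenation of finitely many minimizing geodesic segments of N, each of length at most (2/5)δ, and to satisfy sup_{t∈[0,1]} d_N(Φ(c(t)), c̄(t)) ≤ (7/10)δ. -/
open Metric Set
open scoped ENNReal unitInterval

/-- A geodesic metric space: any two points are joined by a path along which
the distance is realized affinely (a minimizing geodesic). -/
def IsGeodesicSpace (X : Type*) [MetricSpace X] : Prop :=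
  ∀ x y : X, ∃ γ : Path x y, ∀ s t : unitInterval,
    dist (γ s) (γ t) = |(s : ℝ) - (t : ℝ)| * dist x y

/-- A loop in a metric space `X`: a map `ℝ → X`, continuous on `[0,1]`,
with equal endpoints. -/
structure MLoop (X : Type*) [MetricSpace X] where
  toFun : ℝ → X
  continuousOn : ContinuousOn toFun (Set.Icc 0 1)
  closed : toFun 0 = toFun 1

/-- The length of a loop: the total variation of the map on `[0,1]`. -/
noncomputable def MLoop.length {X : Type*} [MetricSpace X] (c : MLoop X) : ℝ≥0∞ :=
  eVariationOn c.toFun (Set.Icc 0 1)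

/-- A loop, as a `Path` from its basepoint to itself. -/
noncomputable def MLoop.path {X : Type*} [MetricSpace X] (c : MLoop X) :
    Path (c.toFun 0) (c.toFun 0) where
  toFun := fun t : unitInterval => c.toFun t
  continuous_toFun := c.continuousOn.restrict
  source' := rfl
  target' := c.closed.symm

attribute [local instance] Path.Homotopic.setoid

/-- The element of the fundamental group determined by a homotopy class of a based loop. -/
noncomputable def FundamentalGroup.ofLoop {X : Type*} [TopologicalSpace X] {x : X}
    (p : Path.Homotopic.Quotient x x) : FundamentalGroup X x :=
  FundamentalGroup.fromPath p

open Classical in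
/-- The class, in the abelianized fundamental group based at `x₀`, of a loop based
at a (possibly) different point `x`: conjugate by some path joining `x₀` to `x`.
(In a path-connected space the result is independent of the choice of path.) -/
noncomputable def loopClassAt {X : Type*} [TopologicalSpace X] (x₀ : X) {x : X}
    (γ : Path x x) : Abelianization (FundamentalGroup X x₀) :=
  if h : Joined x₀ x then
    Abelianization.of (FundamentalGroup.ofLoop ⟦(h.somePath.trans γ).trans h.somePath.symm⟧)
  else 1

/-- The first homology group of a (nonempty, path-connected) space, realized as the
abelianization of the fundamental group, written additively. -/
noncomputable def H1 (X : Type*) [TopologicalSpace X] [Nonempty X] : Type _ :=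
  Additive (Abelianization (FundamentalGroup X (Classical.arbitrary X)))

noncomputable instance {X : Type*} [TopologicalSpace X] [Nonempty X] : AddCommGroup (H1 X) :=
  inferInstanceAs
    (AddCommGroup (Additive (Abelianization (FundamentalGroup X (Classical.arbitrary X)))))

/-- The first homology class `[[c]]` of a loop `c`. -/
noncomputable def MLoop.h1 {X : Type*} [MetricSpace X] [Nonempty X] (c : MLoop X) : H1 X :=
  Additive.ofMul (loopClassAt (Classical.arbitrary X) c.path)

/-- `H_1^δ(X;ℤ)`: the subgroup of `H_1(X;ℤ)` generated by classes of (rectifiable)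
loops of length at most `10 δ`. -/
noncomputable def H1short (X : Type*) [MetricSpace X] [Nonempty X] (δ : ℝ) :
    AddSubgroup (H1 X) :=
  AddSubgroup.closure
    {a | ∃ c : MLoop X, c.length ≤ ENNReal.ofReal (10 * δ) ∧ a = c.h1}

/-- `cb` is a `δ`-approximating loop (in `N`) of the loop `c` (in `M`), relative to the
Gromov–Hausdorff approximation `Φ : M → N`. -/
def IsApproxLoop {M N : Type*} [MetricSpace M] [MetricSpace N] (Φ : M → N) (δ : ℝ)
    (c : MLoop M) (cb : MLoop N) : Prop :=
  ∀ t ∈ Set.Icc (0 : ℝ) 1, dist (cb.toFun t) (Φ (c.toFun t)) < δ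

/-- A loop is a concatenation of finitely many minimizing geodesic segments, each of
length at most `ℓ`. -/
def PiecewiseGeodesic {X : Type*} [MetricSpace X] (c : MLoop X) (ℓ : ℝ) : Prop :=
  ∃ (n : ℕ) (t : ℕ → ℝ), t 0 = 0 ∧ t n = 1 ∧ (∀ i < n, t i ≤ t (i + 1)) ∧
    ∀ i < n,
      eVariationOn c.toFun (Set.Icc (t i) (t (i + 1))) =
        ENNReal.ofReal (dist (c.toFun (t i)) (c.toFun (t (i + 1)))) ∧
      dist (c.toFun (t i)) (c.toFun (t (i + 1))) ≤ ℓ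

/-- Every closed ball of radius `ι` in `N` is contractible in `N` (its inclusion is
null-homotopic). -/
def BallsContractibleIn (N : Type*) [MetricSpace N] (ι : ℝ) : Prop :=
  ∀ z : N, ∃ y : N,
    ContinuousMap.Homotopic
      (⟨Subtype.val, continuous_subtype_val⟩ : C(Metric.closedBall z ι, N))
      (ContinuousMap.const _ y)

/-- Two loops are freely homotopic: homotopic through a continuous family of loops. -/
def MLoop.FreelyHomotopic {X : Type*} [MetricSpace X] (c₀ c₁ : MLoop X) : Prop :=
  ∃ H : ℝ × ℝ → X, ContinuousOn H (Set.Icc 0 1 ×ˢ Set.Icc 0 1) ∧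
    (∀ t ∈ Set.Icc (0 : ℝ) 1, H (0, t) = c₀.toFun t) ∧
    (∀ t ∈ Set.Icc (0 : ℝ) 1, H (1, t) = c₁.toFun t) ∧
    (∀ s ∈ Set.Icc (0 : ℝ) 1, H (s, 0) = H (s, 1))


section AuxStatement0

private lemma aux_glue {X Y : Type*} [TopologicalSpace X] [TopologicalSpace Y] {f : X → Y}
    {s t : Set X} (hs : IsClosed s) (ht : IsClosed t)
    (hfs : ContinuousOn f s) (hft : ContinuousOn f t) :
    ContinuousOn f (s ∪ t) := by
  intro x hx
  refine ContinuousWithinAt.union ?_ ?_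
  · by_cases h : x ∈ s
    · exact hfs x h
    · exact continuousWithinAt_of_notMem_closure (by rwa [hs.closure_eq])
  · by_cases h : x ∈ t
    · exact hft x h
    · exact continuousWithinAt_of_notMem_closure (by rwa [ht.closure_eq])

private lemma aux_evar {X : Type*} [MetricSpace X] {f : ℝ → X} {a b L : ℝ} (hab : a ≤ b)
    (hL : 0 ≤ L) (h : ∀ s ∈ Set.Icc a b, ∀ t ∈ Set.Icc a b, dist (f s) (f t) = L * |s - t|) :
    eVariationOn f (Set.Icc a b) = ENNReal.ofReal (dist (f a) (f b)) := by
  have ha : a ∈ Icc a b := left_mem_Icc.2 hab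
  have hb : b ∈ Icc a b := right_mem_Icc.2 hab
  refine le_antisymm ?_ ?_
  · have hlip : LipschitzOnWith (Real.toNNReal L) f (Icc a b) := by
      apply LipschitzOnWith.of_dist_le_mul
      intro x hx y hy
      rw [h x hx y hy, Real.dist_eq, Real.coe_toNNReal L hL]
    have hid : eVariationOn (id : ℝ → ℝ) (Icc a b) ≤ ENNReal.ofReal (b - a) := by
      have := (monotoneOn_id (s := Icc a b)).eVariationOn_le ha hb
      rwa [inter_self] at this
    calc eVariationOn f (Icc a b) = eVariationOn (f ∘ id) (Icc a b) := rfl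
      _ ≤ (Real.toNNReal L : ℝ≥0∞) * eVariationOn (id : ℝ → ℝ) (Icc a b) :=
          hlip.comp_eVariationOn_le (mapsTo_id _)
      _ ≤ ENNReal.ofReal L * ENNReal.ofReal (b - a) := by
          rw [ENNReal.ofReal]; exact mul_le_mul_right hid _
      _ = ENNReal.ofReal (L * (b - a)) := (ENNReal.ofReal_mul hL).symm
      _ = ENNReal.ofReal (dist (f a) (f b)) := by
          rw [h a ha b hb, abs_sub_comm, abs_of_nonneg (sub_nonneg.2 hab)]
  · rw [← edist_dist]
    exact eVariationOn.edist_le f ha hb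

end AuxStatement0

/-- Every rectifiable loop in `M` admits a `δ`-approximating loop in `N`
which is a concatenation of finitely many minimizing geodesic segments of `N`, each of
length at most `(2/5)δ`, and which satisfies
`sup_t dist (Φ (c t)) (c̄ t) ≤ (7/10) δ`. -/
theorem statement_0 {M N : Type*} [MetricSpace M] [MetricSpace N]
    [CompactSpace M] [CompactSpace N]
    (hM : IsGeodesicSpace M) (hN : IsGeodesicSpace N)
    (δ : ℝ) (hδ : 0 < δ) (Φ : M → N)
    (hΦ : ∀ x y : M, |dist (Φ x) (Φ y) - dist x y| < δ / 10)
    (hdense : ∀ z : N, ∃ x : M, dist z (Φ x) ≤ δ / 10)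
    (c : MLoop M) (hc : c.length ≠ ⊤) :
    ∃ cb : MLoop N,
      IsApproxLoop Φ δ c cb ∧
      (∀ t ∈ Set.Icc (0 : ℝ) 1, dist (Φ (c.toFun t)) (cb.toFun t) ≤ (7 / 10) * δ) ∧
      PiecewiseGeodesic cb ((2 / 5) * δ) := by
  classical
  have huc : UniformContinuousOn c.toFun (Set.Icc 0 1) :=
    isCompact_Icc.uniformContinuousOn_of_continuous c.continuousOn
  rw [Metric.uniformContinuousOn_iff_le] at huc
  obtain ⟨ε, hε, hmod⟩ := huc (δ / 10) (by positivity)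
  obtain ⟨m, hm⟩ := exists_nat_one_div_lt hε
  set n : ℕ := m + 1 with hn_def
  have hn0 : 0 < n := Nat.succ_pos m
  set nr : ℝ := (n : ℝ) with hnr_def
  have hnr0 : (0 : ℝ) < nr := by rw [hnr_def]; exact_mod_cast hn0
  have hmesh : 1 / nr ≤ ε := by
    have h : nr = (m : ℝ) + 1 := by rw [hnr_def, hn_def]; push_cast; ring
    rw [h]; exact hm.le
  set p : ℕ → N := fun i => Φ (c.toFun ((i : ℝ) / nr)) with hp_def
  choose γ hγ using fun i => hN (p i) (p (i + 1))
  set d : ℕ → ℝ := fun i => dist (p i) (p (i + 1)) with hd_def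
  set f : ℕ → ℝ → N := fun i s => (γ i).extend (nr * s - i) with hf_def
  set F : ℝ → N := fun s => f (min (n - 1) ⌊nr * s⌋₊) s with hF_def
  -- membership helper
  have hmem : ∀ (i : ℕ) (s : ℝ), (i : ℝ) / nr ≤ s → s ≤ ((i : ℝ) + 1) / nr →
      nr * s - i ∈ Set.Icc (0 : ℝ) 1 := by
    intro i s h1 h2
    rw [div_le_iff₀ hnr0] at h1
    rw [le_div_iff₀ hnr0] at h2
    constructor <;> linarith [mul_comm nr s]
  -- distances along a geodesic piece
  have hfd : ∀ i : ℕ, ∀ s ∈ Set.Icc ((i : ℝ) / nr) (((i : ℝ) + 1) / nr),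
      ∀ t ∈ Set.Icc ((i : ℝ) / nr) (((i : ℝ) + 1) / nr),
      dist (f i s) (f i t) = (nr * d i) * |s - t| := by
    intro i s hs t ht
    have hs' := hmem i s hs.1 hs.2
    have ht' := hmem i t ht.1 ht.2
    show dist ((γ i).extend (nr * s - i)) ((γ i).extend (nr * t - i)) = _
    rw [Path.extend_apply (γ i) hs', Path.extend_apply (γ i) ht',
      hγ i ⟨_, hs'⟩ ⟨_, ht'⟩]
    show |(nr * s - i) - (nr * t - i)| * dist (p i) (p (i + 1)) = nr * d i * |s - t|
    have he : (nr * s - i) - (nr * t - i) = nr * (s - t) := by ring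
    rw [he, abs_mul, abs_of_nonneg hnr0.le]
    show nr * |s - t| * d i = nr * d i * |s - t|
    ring
  -- distance from the left endpoint of a piece
  have hfp : ∀ i : ℕ, ∀ s ∈ Set.Icc ((i : ℝ) / nr) (((i : ℝ) + 1) / nr),
      dist (p i) (f i s) ≤ d i := by
    intro i s hs
    have hs' := hmem i s hs.1 hs.2
    have h0 : (γ i) 0 = p i := (γ i).source
    have key : dist ((γ i) 0) ((γ i) ⟨nr * s - i, hs'⟩) ≤ d i := by
      rw [hγ i 0 ⟨_, hs'⟩]
      have h1 : |((0 : unitInterval) : ℝ) - (nr * s - i)| ≤ 1 := by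
        have hz : ((0 : unitInterval) : ℝ) = 0 := rfl
        rw [hz, abs_sub_comm, sub_zero, abs_of_nonneg hs'.1]
        exact hs'.2
      refine le_trans (mul_le_mul_of_nonneg_right h1 dist_nonneg) (le_of_eq ?_)
      exact one_mul _
    rw [h0] at key
    show dist (p i) ((γ i).extend (nr * s - i)) ≤ d i
    rw [Path.extend_apply (γ i) hs']
    exact key
  -- values at the endpoints of pieces
  have hend0 : ∀ i : ℕ, f i ((i : ℝ) / nr) = p i := by
    intro i
    show (γ i).extend (nr * ((i : ℝ) / nr) - i) = p i
    have hz : nr * ((i : ℝ) / nr) - i = 0 := by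
      rw [mul_comm, div_mul_cancel₀ _ hnr0.ne', sub_self]
    rw [hz, Path.extend_zero]
  have hend1 : ∀ i : ℕ, f i (((i : ℝ) + 1) / nr) = p (i + 1) := by
    intro i
    show (γ i).extend (nr * (((i : ℝ) + 1) / nr) - i) = p (i + 1)
    have hz : nr * (((i : ℝ) + 1) / nr) - i = 1 := by
      rw [mul_comm, div_mul_cancel₀ _ hnr0.ne']; ring
    rw [hz, Path.extend_one]
  -- F agrees with f i on the i-th piece
  have HA : ∀ i : ℕ, i < n → ∀ s ∈ Set.Icc ((i : ℝ) / nr) (((i : ℝ) + 1) / nr),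
      F s = f i s := by
    intro i hi s hs
    rcases eq_or_lt_of_le hs.2 with heq | hlt
    · have hval : nr * s = (i : ℝ) + 1 := by
        rw [heq, mul_comm, div_mul_cancel₀ _ hnr0.ne']
      have hfloor : ⌊nr * s⌋₊ = i + 1 := by
        rw [hval, show ((i : ℝ) + 1) = ((i + 1 : ℕ) : ℝ) by push_cast; ring]
        exact Nat.floor_natCast _
      show f (min (n - 1) ⌊nr * s⌋₊) s = f i s
      rw [hfloor]
      by_cases hcase : i + 1 ≤ n - 1
      · rw [min_eq_right hcase]
        have h1 : f (i + 1) s = p (i + 1) := by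
          show (γ (i + 1)).extend (nr * s - (i + 1 : ℕ)) = p (i + 1)
          have hz : nr * s - ((i + 1 : ℕ) : ℝ) = 0 := by rw [hval]; push_cast; ring
          rw [hz, Path.extend_zero]
        have h2 : f i s = p (i + 1) := by rw [heq]; exact hend1 i
        rw [h1, h2]
      · rw [min_eq_left (by omega : n - 1 ≤ i + 1), (by omega : n - 1 = i)]
    · have hs0 : (0 : ℝ) ≤ s :=
        le_trans (div_nonneg (Nat.cast_nonneg _) hnr0.le) hs.1
      have h0 : (0 : ℝ) ≤ nr * s := mul_nonneg hnr0.le hs0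
      have hfloor : ⌊nr * s⌋₊ = i := by
        rw [Nat.floor_eq_iff h0]
        constructor
        · have h1 := hs.1
          rw [div_le_iff₀ hnr0] at h1
          linarith [mul_comm nr s]
        · rw [lt_div_iff₀ hnr0] at hlt
          linarith [mul_comm nr s]
      show f (min (n - 1) ⌊nr * s⌋₊) s = f i s
      rw [hfloor, min_eq_right (by omega : i ≤ n - 1)]
  -- continuity of each piece
  have hfc : ∀ i : ℕ, Continuous (f i) := by
    intro i
    show Continuous fun s => (γ i).extend (nr * s - i)
    exact (γ i).continuous_extend.comp
      ((continuous_const.mul continuous_id).sub continuous_const)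
  have hstep : ∀ j : ℕ, (j : ℝ) / nr ≤ ((j : ℝ) + 1) / nr := by
    intro j
    exact (div_le_div_iff_of_pos_right hnr0).2 (by linarith)
  -- continuity of F
  have contF : ContinuousOn F (Set.Icc 0 1) := by
    have key : ∀ j : ℕ, j ≤ n → ContinuousOn F (Set.Icc 0 ((j : ℝ) / nr)) := by
      intro j
      induction j with
      | zero =>
        intro _
        simp only [Nat.cast_zero, zero_div, Set.Icc_self]
        exact continuousOn_singleton F 0
      | succ j ih =>
        intro hj
        have h1 : ContinuousOn F (Set.Icc 0 ((j : ℝ) / nr)) := ih (by omega)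
        have h2 : ContinuousOn F (Set.Icc ((j : ℝ) / nr) (((j : ℝ) + 1) / nr)) :=
          ((hfc j).continuousOn).congr (fun x hx => HA j (by omega) x hx)
        have h3 := aux_glue isClosed_Icc isClosed_Icc h1 h2
        rw [Set.Icc_union_Icc_eq_Icc
          (div_nonneg (Nat.cast_nonneg _) hnr0.le) (hstep j)] at h3
        have hc : ((j + 1 : ℕ) : ℝ) = (j : ℝ) + 1 := by push_cast; ring
        rw [hc]
        exact h3
    have hfin := key n le_rfl
    rw [← hnr_def, div_self hnr0.ne'] at hfin
    exact hfin
  -- F is a closed loop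
  have hF0 : F 0 = p 0 := by
    show f (min (n - 1) ⌊nr * 0⌋₊) 0 = p 0
    rw [mul_zero, Nat.floor_zero, min_eq_right (Nat.zero_le _)]
    show (γ 0).extend (nr * 0 - ((0 : ℕ) : ℝ)) = p 0
    have hz : nr * 0 - ((0 : ℕ) : ℝ) = 0 := by norm_num
    rw [hz, Path.extend_zero]
  have hcastn : ((n - 1 : ℕ) : ℝ) = nr - 1 := by
    rw [Nat.cast_sub (by omega : 1 ≤ n), Nat.cast_one, hnr_def]
  have hF1 : F 1 = p n := by
    have hmem1 : (1 : ℝ) ∈ Set.Icc (((n - 1 : ℕ) : ℝ) / nr) ((((n - 1 : ℕ) : ℝ) + 1) / nr) := by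
      rw [hcastn]
      constructor
      · rw [div_le_one hnr0]; linarith
      · rw [le_div_iff₀ hnr0]; linarith
    have h1 := HA (n - 1) (by omega) 1 hmem1
    rw [h1]
    have h2 : (1 : ℝ) = (((n - 1 : ℕ) : ℝ) + 1) / nr := by
      rw [hcastn, sub_add_cancel, div_self hnr0.ne']
    rw [h2, hend1 (n - 1), Nat.sub_add_cancel hn0]
  have closedF : F 0 = F 1 := by
    rw [hF0, hF1]
    show Φ (c.toFun (((0 : ℕ) : ℝ) / nr)) = Φ (c.toFun (((n : ℕ) : ℝ) / nr))
    have e0 : ((0 : ℕ) : ℝ) / nr = 0 := by simp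
    have e1 : ((n : ℕ) : ℝ) / nr = 1 := by rw [← hnr_def, div_self hnr0.ne']
    rw [e0, e1, c.closed]
  -- each geodesic piece is short
  have hdb : ∀ i : ℕ, i < n → d i ≤ δ / 5 := by
    intro i hi
    have hi1 : ((i : ℝ) / nr) ∈ Set.Icc (0 : ℝ) 1 := by
      constructor
      · exact div_nonneg (Nat.cast_nonneg _) hnr0.le
      · rw [div_le_one hnr0, hnr_def]; exact_mod_cast hi.le
    have hi2 : (((i : ℝ) + 1) / nr) ∈ Set.Icc (0 : ℝ) 1 := by
      constructor
      · exact div_nonneg (by positivity) hnr0.le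
      · rw [div_le_one hnr0, hnr_def]; exact_mod_cast hi
    have hdist : dist ((i : ℝ) / nr) (((i : ℝ) + 1) / nr) ≤ ε := by
      rw [Real.dist_eq, abs_sub_comm,
        show ((i : ℝ) + 1) / nr - (i : ℝ) / nr = 1 / nr from by ring,
        abs_of_nonneg (div_nonneg zero_le_one hnr0.le)]
      exact hmesh
    have h1 := hmod _ hi1 _ hi2 hdist
    have h2 := hΦ (c.toFun ((i : ℝ) / nr)) (c.toFun (((i : ℝ) + 1) / nr))
    rw [abs_lt] at h2
    have hpp : p (i + 1) = Φ (c.toFun (((i : ℝ) + 1) / nr)) := by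
      show Φ (c.toFun (((i + 1 : ℕ) : ℝ) / nr)) = _
      rw [Nat.cast_add_one]
    have hgoal : dist (p i) (p (i + 1)) ≤ δ / 5 := by
      rw [hpp]
      show dist (Φ (c.toFun ((i : ℝ) / nr))) (Φ (c.toFun (((i : ℝ) + 1) / nr))) ≤ δ / 5
      linarith [h2.2]
    exact hgoal
  -- the main distance estimate
  have hmain : ∀ t ∈ Set.Icc (0 : ℝ) 1, dist (Φ (c.toFun t)) (F t) ≤ 2 / 5 * δ := by
    intro t ht
    set i : ℕ := min (n - 1) ⌊nr * t⌋₊ with hi_def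
    have hi : i < n := lt_of_le_of_lt (min_le_left _ _) (Nat.sub_lt hn0 one_pos)
    have hile : i ≤ ⌊nr * t⌋₊ := min_le_right _ _
    have hd1 : (i : ℝ) / nr ≤ t := by
      rw [div_le_iff₀ hnr0]
      have h1 : (i : ℝ) ≤ (⌊nr * t⌋₊ : ℝ) := by exact_mod_cast hile
      have h2 : ((⌊nr * t⌋₊ : ℕ) : ℝ) ≤ nr * t := Nat.floor_le (mul_nonneg hnr0.le ht.1)
      linarith [mul_comm t nr]
    have hd2 : t ≤ ((i : ℝ) + 1) / nr := by
      rcases le_or_gt ⌊nr * t⌋₊ (n - 1) with hcase | hcase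
      · have hie : i = ⌊nr * t⌋₊ := min_eq_right hcase
        rw [le_div_iff₀ hnr0, hie]
        have h3 := Nat.lt_floor_add_one (nr * t)
        have h3' : nr * t < (⌊nr * t⌋₊ : ℝ) + 1 := by exact_mod_cast h3
        linarith [mul_comm t nr]
      · have hie : i = n - 1 := min_eq_left hcase.le
        have hc1 : ((i : ℝ) + 1) = nr := by rw [hie, hcastn]; ring
        rw [hc1, div_self hnr0.ne']
        exact ht.2
    have htmem : t ∈ Set.Icc ((i : ℝ) / nr) (((i : ℝ) + 1) / nr) := ⟨hd1, hd2⟩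
    have hFt : F t = f i t := HA i hi t htmem
    have h1 : dist (p i) (f i t) ≤ d i := hfp i t htmem
    have himem : ((i : ℝ) / nr) ∈ Set.Icc (0 : ℝ) 1 :=
      ⟨div_nonneg (Nat.cast_nonneg _) hnr0.le, le_trans hd1 ht.2⟩
    have h2 : dist (c.toFun t) (c.toFun ((i : ℝ) / nr)) ≤ δ / 10 := by
      apply hmod t ht _ himem
      rw [Real.dist_eq, abs_of_nonneg (by linarith : (0 : ℝ) ≤ t - (i : ℝ) / nr)]
      have hsub : ((i : ℝ) + 1) / nr - (i : ℝ) / nr = 1 / nr := by ring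
      linarith
    have h3 := hΦ (c.toFun t) (c.toFun ((i : ℝ) / nr))
    rw [abs_lt] at h3
    have h4 : dist (Φ (c.toFun t)) (p i) ≤ δ / 5 := by
      show dist (Φ (c.toFun t)) (Φ (c.toFun ((i : ℝ) / nr))) ≤ δ / 5
      linarith [h3.2]
    have h5 : d i ≤ δ / 5 := hdb i hi
    calc dist (Φ (c.toFun t)) (F t)
        ≤ dist (Φ (c.toFun t)) (p i) + dist (p i) (F t) := dist_triangle _ _ _
      _ ≤ δ / 5 + d i := by rw [hFt]; exact add_le_add h4 h1
      _ ≤ 2 / 5 * δ := by linarith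
  -- assemble the loop
  refine ⟨⟨F, contF, closedF⟩, ?_, ?_, ?_⟩
  · intro t ht
    show dist (F t) (Φ (c.toFun t)) < δ
    rw [dist_comm]
    calc dist (Φ (c.toFun t)) (F t) ≤ 2 / 5 * δ := hmain t ht
      _ < δ := by linarith
  · intro t ht
    show dist (Φ (c.toFun t)) (F t) ≤ 7 / 10 * δ
    linarith [hmain t ht]
  · refine ⟨n, fun i => (i : ℝ) / nr, by simp, ?_, ?_, ?_⟩
    · show ((n : ℕ) : ℝ) / nr = 1
      rw [← hnr_def, div_self hnr0.ne']
    · intro i _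
      show (i : ℝ) / nr ≤ ((i + 1 : ℕ) : ℝ) / nr
      rw [Nat.cast_add_one]
      exact hstep i
    · intro i hi
      have hcast : ((i + 1 : ℕ) : ℝ) = (i : ℝ) + 1 := by rw [Nat.cast_add_one]
      constructor
      · show eVariationOn F (Set.Icc ((i : ℝ) / nr) (((i + 1 : ℕ) : ℝ) / nr)) =
            ENNReal.ofReal (dist (F ((i : ℝ) / nr)) (F (((i + 1 : ℕ) : ℝ) / nr)))
        rw [hcast]
        apply aux_evar (hstep i) (mul_nonneg hnr0.le (by exact dist_nonneg : (0 : ℝ) ≤ d i))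
        intro s hs t ht
        show dist (F s) (F t) = nr * d i * |s - t|
        rw [HA i hi s hs, HA i hi t ht]
        exact hfd i s hs t ht
      · show dist (F ((i : ℝ) / nr)) (F (((i + 1 : ℕ) : ℝ) / nr)) ≤ 2 / 5 * δ
        rw [hcast]
        have e1 : F ((i : ℝ) / nr) = p i := by
          rw [HA i hi _ (Set.left_mem_Icc.2 (hstep i)), hend0]
        have e2 : F (((i : ℝ) + 1) / nr) = p (i + 1) := by
          rw [HA i hi _ (Set.right_mem_Icc.2 (hstep i)), hend1]
        rw [e1, e2]
        have h5 : dist (p i) (p (i + 1)) ≤ δ / 5 := hdb i hi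
        linarith
end

section
/- Let γ₀ and γ₁ be rectifiable loops in M admitting δ-approximating loops γ̄₀ and γ̄₁ in N that are freely homotopic in N (i.e. homotopic through a continuous family of loops). Then [[γ₀]] − [[γ₁]] ∈ H_1^δ(M;ℤ). -/
open Metric Set
open scoped ENNReal unitInterval

attribute [local instance] Path.Homotopic.setoid

section Algebra
set_option linter.unusedSectionVars false

open CategoryTheory

variable {X : Type*} [MetricSpace X] [Nonempty X]

/-- The abelianized class of a loop at the basepoint. -/
noncomputable def toAb (x₀ : X) (p : (⟨x₀⟩ : FundamentalGroupoid X) ⟶ ⟨x₀⟩) :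
    Abelianization (FundamentalGroup X x₀) :=
  Abelianization.of (FundamentalGroup.ofLoop p)

theorem ofLoop_comp {x₀ : X} (p q : (⟨x₀⟩ : FundamentalGroupoid X) ⟶ ⟨x₀⟩) :
    FundamentalGroup.ofLoop (p ≫ q) =
      FundamentalGroup.ofLoop q * FundamentalGroup.ofLoop p := by
  rfl

theorem toAb_comp {x₀ : X} (p q : (⟨x₀⟩ : FundamentalGroupoid X) ⟶ ⟨x₀⟩) :
    toAb x₀ (p ≫ q) = toAb x₀ p * toAb x₀ q := by
  unfold toAb
  rw [ofLoop_comp, map_mul, mul_comm]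

theorem toAb_id (x₀ : X) : toAb x₀ (𝟙 (⟨x₀⟩ : FundamentalGroupoid X)) = 1 := by
  have : FundamentalGroup.ofLoop (𝟙 (⟨x₀⟩ : FundamentalGroupoid X)) = 1 := rfl
  unfold toAb
  rw [this, map_one]

theorem toAb_conj {x₀ : X} {Y : FundamentalGroupoid X}
    (P Q : (⟨x₀⟩ : FundamentalGroupoid X) ⟶ Y) (G : Y ⟶ Y) :
    toAb x₀ (P ≫ G ≫ inv P) = toAb x₀ (Q ≫ G ≫ inv Q) := by
  have h1 : P ≫ G ≫ inv P = (P ≫ G ≫ inv Q) ≫ (Q ≫ inv P) := by simp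
  have h2 : Q ≫ G ≫ inv Q = (Q ≫ inv P) ≫ (P ≫ G ≫ inv Q) := by simp
  rw [h1, h2, toAb_comp, toAb_comp, mul_comm]

end Algebra

section KL

open CategoryTheory

set_option linter.unusedSectionVars false

variable {X : Type*} [MetricSpace X] [Nonempty X] (hJ : ∀ x y : X, Joined x y)

/-- A chosen connecting morphism from the basepoint to `x` in the fundamental groupoid. -/
noncomputable def conn (x : X) :
    (⟨Classical.arbitrary X⟩ : FundamentalGroupoid X) ⟶ ⟨x⟩ :=
  ⟦(hJ (Classical.arbitrary X) x).somePath⟧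

/-- The `H1` class of a loop based anywhere. -/
noncomputable def kl {x : X} (G : (⟨x⟩ : FundamentalGroupoid X) ⟶ ⟨x⟩) : H1 X :=
  Additive.ofMul (toAb (Classical.arbitrary X) (conn hJ x ≫ G ≫ inv (conn hJ x)))

theorem kl_eq_of_conj {x : X} (P : (⟨Classical.arbitrary X⟩ : FundamentalGroupoid X) ⟶ ⟨x⟩)
    (G : (⟨x⟩ : FundamentalGroupoid X) ⟶ ⟨x⟩) :
    kl hJ G = Additive.ofMul (toAb (Classical.arbitrary X) (P ≫ G ≫ inv P)) := by
  unfold kl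
  rw [toAb_conj (conn hJ x) P]

theorem kl_comp {x : X} (G G' : (⟨x⟩ : FundamentalGroupoid X) ⟶ ⟨x⟩) :
    kl hJ (G ≫ G') = kl hJ G + kl hJ G' := by
  unfold kl
  have : conn hJ x ≫ (G ≫ G') ≫ inv (conn hJ x) =
      (conn hJ x ≫ G ≫ inv (conn hJ x)) ≫ (conn hJ x ≫ G' ≫ inv (conn hJ x)) := by simp
  rw [this, toAb_comp]
  rfl

theorem kl_id (x : X) : kl hJ (𝟙 (⟨x⟩ : FundamentalGroupoid X)) = 0 := by
  unfold kl
  simp [toAb_id]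
  rfl

theorem kl_conj {x y : X} (P : (⟨y⟩ : FundamentalGroupoid X) ⟶ ⟨x⟩)
    (G : (⟨x⟩ : FundamentalGroupoid X) ⟶ ⟨x⟩) :
    kl hJ (P ≫ G ≫ inv P) = kl hJ G := by
  rw [kl_eq_of_conj hJ (conn hJ y ≫ P)]
  unfold kl
  congr 1
  apply congrArg
  simp [Category.assoc]

theorem kl_insert {z w : X} (U : (⟨z⟩ : FundamentalGroupoid X) ⟶ ⟨w⟩)
    (G : (⟨w⟩ : FundamentalGroupoid X) ⟶ ⟨w⟩) (V : (⟨w⟩ : FundamentalGroupoid X) ⟶ ⟨z⟩) :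
    kl hJ (U ≫ G ≫ V) = kl hJ (U ≫ V) + kl hJ G := by
  have : U ≫ G ≫ V = (U ≫ G ≫ inv U) ≫ (U ≫ V) := by simp
  rw [this, kl_comp, kl_conj, add_comm]

end KL

section Bridge

open CategoryTheory

set_option linter.unusedSectionVars false

variable {X : Type*} [MetricSpace X] [Nonempty X]

/-- The morphism in the fundamental groupoid determined by a path. -/
noncomputable def pq {a b : X} (P : Path a b) : (⟨a⟩ : FundamentalGroupoid X) ⟶ ⟨b⟩ := ⟦P⟧

theorem pq_comp {a b c : X} (P : Path a b) (Q : Path b c) :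
    pq P ≫ pq Q = pq (P.trans Q) :=
  rfl

theorem pq_inv {a b : X} (P : Path a b) : inv (pq P) = pq P.symm := by
  rw [← Groupoid.inv_eq_inv]
  rfl

theorem pq_sound {a b : X} {P Q : Path a b} (h : Path.Homotopic P Q) : pq P = pq Q :=
  Quotient.sound h

variable (hJ : ∀ x y : X, Joined x y)

theorem h1_eq_kl (c : MLoop X) : c.h1 = kl hJ (pq c.path) := by
  unfold MLoop.h1 loopClassAt
  rw [dif_pos (hJ (Classical.arbitrary X) (c.toFun 0))]
  rw [kl_eq_of_conj hJ (pq (hJ (Classical.arbitrary X) (c.toFun 0)).somePath)]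
  congr 2
  rw [← Category.assoc, pq_comp, pq_inv, pq_comp]
  rfl

theorem kl_eqToHom_conj {x y : X} (h : (⟨x⟩ : FundamentalGroupoid X) = ⟨y⟩)
    (G : (⟨y⟩ : FundamentalGroupoid X) ⟶ ⟨y⟩) :
    kl hJ (eqToHom h ≫ G ≫ eqToHom h.symm) = kl hJ G := by
  have : eqToHom h.symm = inv (eqToHom h) := by simp
  rw [this, kl_conj]

/-- Equality of path classes with moved endpoints. -/
theorem pq_congr {a b a' b' : X} (P : Path a b) (P' : Path a' b') (ha : a = a') (hb : b = b')
    (hfun : ∀ t : unitInterval, P t = P' t) :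
    pq P = eqToHom (by rw [ha]) ≫ pq P' ≫ eqToHom (by rw [hb]) := by
  subst ha hb
  simp only [eqToHom_refl, Category.comp_id, Category.id_comp]
  have : P = P' := by
    ext t
    exact hfun t
  rw [this]

end Bridge

section Pvar

set_option linter.unusedSectionVars false

open Set

variable {X : Type*} [MetricSpace X]

theorem evar_le_of_lip {f : ℝ → X} {a b C : ℝ} (hC : 0 ≤ C)
    (h : ∀ s ∈ Icc a b, ∀ t ∈ Icc a b, s ≤ t → dist (f s) (f t) ≤ C * (t - s)) :
    eVariationOn f (Icc a b) ≤ ENNReal.ofReal (C * (b - a)) := by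
  rcases le_or_gt a b with hab | hab
  · rw [eVariationOn]
    apply iSup_le
    rintro ⟨n, ⟨u, hu, us⟩⟩
    calc ∑ i ∈ Finset.range n, edist (f (u (i + 1))) (f (u i))
        ≤ ∑ i ∈ Finset.range n, ENNReal.ofReal (C * u (i + 1) - C * u i) := by
          apply Finset.sum_le_sum
          intro i _
          rw [edist_dist, dist_comm]
          apply ENNReal.ofReal_le_ofReal
          have := h (u i) (us i) (u (i + 1)) (us (i + 1)) (hu (Nat.le_succ i))
          nlinarith [this]
      _ = ENNReal.ofReal (∑ i ∈ Finset.range n, (C * u (i + 1) - C * u i)) := by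
          rw [ENNReal.ofReal_sum_of_nonneg]
          intro i _
          have := hu (Nat.le_succ i)
          nlinarith
      _ ≤ ENNReal.ofReal (C * (b - a)) := by
          rw [Finset.sum_range_sub (fun i => C * u i)]
          apply ENNReal.ofReal_le_ofReal
          have h1 := (us n).1
          have h2 := (us n).2
          have h3 := (us 0).1
          have h4 := (us 0).2
          nlinarith
  · rw [Set.Icc_eq_empty (not_le.mpr hab)]
    simp [eVariationOn.subsingleton]

/-- The total variation of a path, as a function `ℝ → X` constant outside `[0,1]`. -/
theorem icc_split (f : ℝ → X) {a b c : ℝ} (hab : a ≤ b) (hbc : b ≤ c) :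
    eVariationOn f (Icc a b) + eVariationOn f (Icc b c) = eVariationOn f (Icc a c) := by
  have := eVariationOn.Icc_add_Icc f (s := univ) hab hbc (mem_univ b)
  simpa using this

set_option linter.unnecessarySimpa false

noncomputable def pvar {a b : X} (P : Path a b) : ℝ≥0∞ :=
  eVariationOn (fun t : ℝ => P (Set.projIcc 0 1 zero_le_one t)) (Set.Icc 0 1)

theorem pvar_trans {a b c : X} (P : Path a b) (Q : Path b c) :
    pvar (P.trans Q) ≤ pvar P + pvar Q := by
  have h2 : (0:ℝ) ≤ 1/2 := by norm_num
  have h2' : (1:ℝ)/2 ≤ 1 := by norm_num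
  rw [pvar, ← icc_split _ h2 h2']
  gcongr
  · -- first half
    have heq : EqOn (fun t : ℝ => (P.trans Q) (Set.projIcc 0 1 zero_le_one t))
        ((fun t : ℝ => P (Set.projIcc 0 1 zero_le_one t)) ∘ (fun t : ℝ => 2 * t))
        (Icc 0 (1/2)) := by
      intro t ht
      have ht1 : t ∈ Icc (0:ℝ) 1 := ⟨ht.1, le_trans ht.2 h2'⟩
      have h2t : 2 * t ∈ Icc (0:ℝ) 1 := ⟨by linarith [ht.1], by linarith [ht.2]⟩
      simp only [Function.comp]
      rw [Set.projIcc_of_mem _ ht1, Set.projIcc_of_mem _ h2t]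
      rw [Path.trans_apply]
      simp only
      rw [dif_pos (by simpa using ht.2 : ((⟨t, ht1⟩ : unitInterval) : ℝ) ≤ 1/2)]
    rw [eVariationOn.eq_of_eqOn heq]
    apply eVariationOn.comp_le_of_monotoneOn
    · intro s _ t _ hst
      show 2*s ≤ 2*t
      linarith
    · intro t ht
      show 2*t ∈ Icc (0:ℝ) 1
      exact ⟨by linarith [ht.1], by linarith [ht.2]⟩
  · -- second half
    have heq : EqOn (fun t : ℝ => (P.trans Q) (Set.projIcc 0 1 zero_le_one t))
        ((fun t : ℝ => Q (Set.projIcc 0 1 zero_le_one t)) ∘ (fun t : ℝ => 2 * t - 1))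
        (Icc (1/2) 1) := by
      intro t ht
      have ht1 : t ∈ Icc (0:ℝ) 1 := ⟨le_trans h2 ht.1, ht.2⟩
      have h2t : 2 * t - 1 ∈ Icc (0:ℝ) 1 := ⟨by linarith [ht.1], by linarith [ht.2]⟩
      simp only [Function.comp]
      rw [Set.projIcc_of_mem _ ht1, Set.projIcc_of_mem _ h2t]
      rcases eq_or_lt_of_le ht.1 with he | hlt
      · have : t = 1/2 := he.symm
        subst this
        rw [Path.trans_apply]
        simp only
        rw [dif_pos (by norm_num : ((⟨(1:ℝ)/2, ht1⟩ : unitInterval) : ℝ) ≤ 1/2)]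
        have : (2 * (1/2) - 1 : ℝ) = 0 := by norm_num
        have e1 : P ⟨2 * (1/2 : ℝ), by norm_num⟩ = b := by
          have : (2 * (1/2 : ℝ)) = 1 := by norm_num
          simp only [this]
          simpa using P.target'
        have e2 : Q ⟨2 * (1/2 : ℝ) - 1, h2t⟩ = b := by
          have : (2 * (1/2 : ℝ) - 1) = 0 := by norm_num
          simp only [this]
          simpa using Q.source'
        rw [e1, e2]
      · rw [Path.trans_apply]
        simp only
        rw [dif_neg (by simpa using hlt : ¬ ((⟨t, ht1⟩ : unitInterval) : ℝ) ≤ 1/2)]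
    rw [eVariationOn.eq_of_eqOn heq]
    apply eVariationOn.comp_le_of_monotoneOn
    · intro s _ t _ hst
      show 2*s - 1 ≤ 2*t - 1
      linarith
    · intro t ht
      show 2*t - 1 ∈ Icc (0:ℝ) 1
      exact ⟨by linarith [ht.1], by linarith [ht.2]⟩

theorem pvar_symm {a b : X} (P : Path a b) : pvar P.symm ≤ pvar P := by
  rw [pvar]
  have heq : EqOn (fun t : ℝ => P.symm (Set.projIcc 0 1 zero_le_one t))
      ((fun t : ℝ => P (Set.projIcc 0 1 zero_le_one t)) ∘ (fun t : ℝ => 1 - t))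
      (Icc 0 1) := by
    intro t ht
    have h1t : 1 - t ∈ Icc (0:ℝ) 1 := ⟨by linarith [ht.2], by linarith [ht.1]⟩
    simp only [Function.comp]
    rw [Set.projIcc_of_mem _ ht, Set.projIcc_of_mem _ h1t]
    rfl
  rw [eVariationOn.eq_of_eqOn heq]
  apply eVariationOn.comp_le_of_antitoneOn
  · intro s _ t _ hst
    simp only
    linarith
  · intro t ht
    show 1 - t ∈ Icc (0:ℝ) 1
    exact ⟨by linarith [ht.2], by linarith [ht.1]⟩

end Pvar

section Geo

set_option linter.unusedSectionVars false

open Set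

variable {X : Type*} [MetricSpace X]

/-- A chosen minimizing geodesic between two points. -/
noncomputable def geo (hX : IsGeodesicSpace X) (x y : X) : Path x y := (hX x y).choose

theorem geo_dist (hX : IsGeodesicSpace X) (x y : X) (s t : unitInterval) :
    dist (geo hX x y s) (geo hX x y t) = |(s:ℝ) - (t:ℝ)| * dist x y :=
  (hX x y).choose_spec s t

theorem pvar_geo (hX : IsGeodesicSpace X) (x y : X) :
    pvar (geo hX x y) ≤ ENNReal.ofReal (dist x y) := by
  have h := evar_le_of_lip (f := fun t : ℝ => geo hX x y (Set.projIcc 0 1 zero_le_one t))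
    (a := 0) (b := 1) (C := dist x y) dist_nonneg ?_
  · simpa [pvar] using h
  · intro s hs t ht hst
    show dist (geo hX x y (Set.projIcc 0 1 zero_le_one s)) (geo hX x y (Set.projIcc 0 1 zero_le_one t)) ≤ dist x y * (t - s)
    rw [Set.projIcc_of_mem _ hs, Set.projIcc_of_mem _ ht, geo_dist]
    have : |(s:ℝ) - t| = t - s := by rw [abs_sub_comm]; exact abs_of_nonneg (by linarith)
    rw [this, mul_comm]

theorem joined_of_geodesic (hX : IsGeodesicSpace X) (x y : X) : Joined x y :=
  ⟨geo hX x y⟩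

/-- The restriction of a loop to a subinterval, as a path. -/
noncomputable def pieceP (c : MLoop X) {a b : ℝ} (ha : a ∈ Icc (0:ℝ) 1)
    (hb : b ∈ Icc (0:ℝ) 1) (hab : a ≤ b) : Path (c.toFun a) (c.toFun b) where
  toFun := fun t => c.toFun (a + (t:ℝ) * (b - a))
  continuous_toFun := by
    apply c.continuousOn.comp_continuous
    · exact (continuous_const.add (continuous_subtype_val.mul continuous_const))
    · intro t
      constructor
      · have := t.2.1
        nlinarith [ha.1]
      · have := t.2.2
        nlinarith [hb.2, t.2.1]
  source' := by simp
  target' := by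
    show c.toFun (a + ((1:unitInterval):ℝ) * (b - a)) = c.toFun b
    norm_num

theorem pvar_pieceP (c : MLoop X) {a b : ℝ} (ha : a ∈ Icc (0:ℝ) 1)
    (hb : b ∈ Icc (0:ℝ) 1) (hab : a ≤ b) :
    pvar (pieceP c ha hb hab) ≤ eVariationOn c.toFun (Icc a b) := by
  rw [pvar]
  have heq : EqOn (fun t : ℝ => (pieceP c ha hb hab) (Set.projIcc 0 1 zero_le_one t))
      (c.toFun ∘ (fun t : ℝ => a + ((Set.projIcc 0 1 zero_le_one t : ℝ)) * (b - a)))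
      (Icc 0 1) := fun t _ => rfl
  rw [eVariationOn.eq_of_eqOn heq]
  apply eVariationOn.comp_le_of_monotoneOn
  · intro s _ t _ hst
    show a + _ * _ ≤ a + _ * _
    have : (Set.projIcc 0 1 zero_le_one s : ℝ) ≤ (Set.projIcc 0 1 zero_le_one t : ℝ) :=
      monotone_projIcc zero_le_one hst
    nlinarith
  · intro t _
    have h1 : (0:ℝ) ≤ (Set.projIcc 0 1 zero_le_one t : ℝ) := (Set.projIcc 0 1 zero_le_one t).2.1
    have h2 : (Set.projIcc 0 1 zero_le_one t : ℝ) ≤ 1 := (Set.projIcc 0 1 zero_le_one t).2.2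
    constructor
    · show a ≤ a + _ * _
      nlinarith
    · show a + _ * _ ≤ b
      nlinarith

theorem edist_le_evar (c : MLoop X) {a b : ℝ} (hab : a ≤ b) :
    edist (c.toFun a) (c.toFun b) ≤ eVariationOn c.toFun (Icc a b) :=
  eVariationOn.edist_le c.toFun (left_mem_Icc.mpr hab) (right_mem_Icc.mpr hab)

/-- A based loop, as an `MLoop`. -/
noncomputable def mkLoop {x : X} (P : Path x x) : MLoop X where
  toFun := fun t => P (Set.projIcc 0 1 zero_le_one t)
  continuousOn := (P.continuous.comp continuous_projIcc).continuousOn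
  closed := by simp

theorem mkLoop_length {x : X} (P : Path x x) : (mkLoop P).length = pvar P := rfl

end Geo

section Kap

open CategoryTheory Set

set_option linter.unusedSectionVars false

variable {X : Type*} [MetricSpace X] [Nonempty X] (hJ : ∀ x y : X, Joined x y) (δ : ℝ)

/-- The class of a loop in `H₁ / H₁^δ`. -/
noncomputable def kap {x : X} (G : (⟨x⟩ : FundamentalGroupoid X) ⟶ ⟨x⟩) :
    H1 X ⧸ H1short X δ :=
  QuotientAddGroup.mk' (H1short X δ) (kl hJ G)

theorem kap_comp {x : X} (G G' : (⟨x⟩ : FundamentalGroupoid X) ⟶ ⟨x⟩) :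
    kap hJ δ (G ≫ G') = kap hJ δ G + kap hJ δ G' := by
  unfold kap
  rw [kl_comp, map_add]

theorem kap_id (x : X) : kap hJ δ (𝟙 (⟨x⟩ : FundamentalGroupoid X)) = 0 := by
  unfold kap
  rw [kl_id, map_zero]

theorem kap_conj {x y : X} (P : (⟨y⟩ : FundamentalGroupoid X) ⟶ ⟨x⟩)
    (G : (⟨x⟩ : FundamentalGroupoid X) ⟶ ⟨x⟩) :
    kap hJ δ (P ≫ G ≫ inv P) = kap hJ δ G := by
  unfold kap
  rw [kl_conj]

theorem kap_insert {z w : X} (U : (⟨z⟩ : FundamentalGroupoid X) ⟶ ⟨w⟩)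
    (G : (⟨w⟩ : FundamentalGroupoid X) ⟶ ⟨w⟩) (V : (⟨w⟩ : FundamentalGroupoid X) ⟶ ⟨z⟩) :
    kap hJ δ (U ≫ G ≫ V) = kap hJ δ (U ≫ V) + kap hJ δ G := by
  unfold kap
  rw [kl_insert, map_add]

theorem kap_inv {x : X} (G : (⟨x⟩ : FundamentalGroupoid X) ⟶ ⟨x⟩) :
    kap hJ δ (inv G) = - kap hJ δ G := by
  have h := (kap_comp hJ δ G (inv G)).symm
  rw [IsIso.hom_inv_id, kap_id] at h
  exact eq_neg_of_add_eq_zero_right h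

/-- The `h1` class of the `MLoop` associated with a based loop. -/
theorem mkLoop_h1 {x : X} (P : Path x x) : (mkLoop P).h1 = kl hJ (pq P) := by
  rw [h1_eq_kl hJ]
  have h0 : (mkLoop P).toFun 0 = x := by
    show P (Set.projIcc 0 1 zero_le_one 0) = x
    simp
  have hfun : ∀ t : unitInterval, (mkLoop P).path t = P t := by
    intro t
    show P (Set.projIcc 0 1 zero_le_one (t : ℝ)) = P t
    congr 1
    rw [Set.projIcc_of_mem _ t.2]
  have := pq_congr (X := X) (mkLoop P).path P h0 h0 hfun
  rw [this]
  exact kl_eqToHom_conj hJ _ _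

theorem kap_kill {x : X} (P : Path x x) (hP : pvar P ≤ ENNReal.ofReal (10 * δ)) :
    kap hJ δ (pq P) = 0 := by
  unfold kap
  rw [QuotientAddGroup.mk'_apply, QuotientAddGroup.eq_zero_iff]
  apply AddSubgroup.subset_closure
  exact ⟨mkLoop P, le_trans (le_of_eq (mkLoop_length P)) hP, (mkLoop_h1 hJ P).symm⟩

end Kap

section Telescope

open CategoryTheory Set

set_option linter.unusedSectionVars false

variable {X : Type*} [MetricSpace X] [Nonempty X] (hJ : ∀ x y : X, Joined x y) (δ : ℝ)

/-- Composite of a chain of morphisms along a sequence of points. -/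
noncomputable def chainM (p : ℕ → X)
    (a : ∀ i, (⟨p i⟩ : FundamentalGroupoid X) ⟶ ⟨p (i+1)⟩) :
    ∀ n, (⟨p 0⟩ : FundamentalGroupoid X) ⟶ ⟨p n⟩
  | 0 => 𝟙 _
  | (n+1) => chainM p a n ≫ a n

theorem tele (p q : ℕ → X)
    (a : ∀ i, (⟨p i⟩ : FundamentalGroupoid X) ⟶ ⟨p (i+1)⟩)
    (b : ∀ i, (⟨q i⟩ : FundamentalGroupoid X) ⟶ ⟨q (i+1)⟩)
    (c : ∀ i, (⟨p i⟩ : FundamentalGroupoid X) ⟶ ⟨q i⟩) :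
    ∀ n, kap hJ δ (chainM p a n ≫ c n ≫ inv (chainM q b n) ≫ inv (c 0)) =
      ∑ i ∈ Finset.range n, kap hJ δ (a i ≫ c (i+1) ≫ inv (b i) ≫ inv (c i))
  | 0 => by
    have : chainM p a 0 ≫ c 0 ≫ inv (chainM q b 0) ≫ inv (c 0) = 𝟙 _ := by
      show 𝟙 _ ≫ c 0 ≫ inv (𝟙 _) ≫ inv (c 0) = 𝟙 _
      simp
    rw [this, kap_id]
    simp
  | (n+1) => by
    have hsplit : chainM p a (n+1) ≫ c (n+1) ≫ inv (chainM q b (n+1)) ≫ inv (c 0) =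
        chainM p a n ≫ (a n ≫ c (n+1) ≫ inv (b n) ≫ inv (c n)) ≫
          (c n ≫ inv (chainM q b n) ≫ inv (c 0)) := by
      show (chainM p a n ≫ a n) ≫ c (n+1) ≫ inv (chainM q b n ≫ b n) ≫ inv (c 0) = _
      simp
    rw [hsplit, kap_insert, Finset.sum_range_succ, tele p q a b c n, add_comm]

theorem compare_closed (p q : ℕ → X)
    (a : ∀ i, (⟨p i⟩ : FundamentalGroupoid X) ⟶ ⟨p (i+1)⟩)
    (b : ∀ i, (⟨q i⟩ : FundamentalGroupoid X) ⟶ ⟨q (i+1)⟩)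
    (c : ∀ i, (⟨p i⟩ : FundamentalGroupoid X) ⟶ ⟨q i⟩)
    (n : ℕ) (hp : p n = p 0) (hq : q n = q 0)
    (hc : c n = eqToHom (by rw [hp]) ≫ c 0 ≫ eqToHom (by rw [hq]))
    (h0 : ∀ i < n, kap hJ δ (a i ≫ c (i+1) ≫ inv (b i) ≫ inv (c i)) = 0) :
    kap hJ δ (chainM p a n ≫ eqToHom (by rw [hp])) =
      kap hJ δ (chainM q b n ≫ eqToHom (by rw [hq])) := by
  have h1 : kap hJ δ (chainM p a n ≫ c n ≫ inv (chainM q b n) ≫ inv (c 0)) = 0 := by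
    rw [tele hJ δ p q a b c n]
    exact Finset.sum_eq_zero fun i hi => h0 i (Finset.mem_range.1 hi)
  have hsplit : chainM p a n ≫ eqToHom (show (⟨p n⟩ : FundamentalGroupoid X) = ⟨p 0⟩ by rw [hp]) =
      (chainM p a n ≫ c n ≫ inv (chainM q b n) ≫ inv (c 0)) ≫
        (c 0 ≫ chainM q b n ≫ inv (c n) ≫
          eqToHom (show (⟨p n⟩ : FundamentalGroupoid X) = ⟨p 0⟩ by rw [hp])) := by
    simp
  rw [hsplit, kap_comp, h1, zero_add]
  have h3 : c 0 ≫ chainM q b n ≫ inv (c n) ≫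
      eqToHom (show (⟨p n⟩ : FundamentalGroupoid X) = ⟨p 0⟩ by rw [hp]) =
      c 0 ≫ (chainM q b n ≫
        eqToHom (show (⟨q n⟩ : FundamentalGroupoid X) = ⟨q 0⟩ by rw [hq])) ≫ inv (c 0) := by
    rw [hc]
    simp
  rw [h3, kap_conj]

end Telescope

section Reparam

open Set

set_option linter.unusedSectionVars false

variable {X : Type*} [MetricSpace X]

theorem homotopic_reparam (c : MLoop X) {x y : X} (P Q : Path x y) (f g : unitInterval → ℝ)
    (hf : Continuous f) (hg : Continuous g)
    (hfI : ∀ t, f t ∈ Icc (0:ℝ) 1) (hgI : ∀ t, g t ∈ Icc (0:ℝ) 1)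
    (hP : ∀ t, P t = c.toFun (f t)) (hQ : ∀ t, Q t = c.toFun (g t))
    (h0 : f 0 = g 0) (h1 : f 1 = g 1) : Path.Homotopic P Q := by
  set F : unitInterval × unitInterval → ℝ :=
    fun p => (1 - (p.1 : ℝ)) * f p.2 + (p.1 : ℝ) * g p.2 with hF
  have hFc : Continuous F := by
    apply Continuous.add
    · exact (continuous_const.sub continuous_subtype_val.fst').mul (hf.comp continuous_snd)
    · exact continuous_subtype_val.fst'.mul (hg.comp continuous_snd)
  have hFI : ∀ p, F p ∈ Icc (0:ℝ) 1 := by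
    rintro ⟨s, t⟩
    have hs1 : (0:ℝ) ≤ 1 - (s:ℝ) := by have := s.2.2; linarith
    have hs2 : (0:ℝ) ≤ (s:ℝ) := s.2.1
    have f1 := (hfI t).1; have f2 := (hfI t).2
    have g1 := (hgI t).1; have g2 := (hgI t).2
    constructor
    · simp only [hF]; nlinarith
    · simp only [hF]; nlinarith
  have hcont : Continuous fun p : unitInterval × unitInterval => c.toFun (F p) :=
    c.continuousOn.comp_continuous hFc hFI
  refine ⟨⟨⟨⟨fun p => c.toFun (F p), hcont⟩, ?_, ?_⟩, ?_⟩⟩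
  · intro u
    show c.toFun (F (0, u)) = P u
    rw [hP u]
    congr 1
    simp [hF]
  · intro u
    show c.toFun (F (1, u)) = Q u
    rw [hQ u]
    congr 1
    simp [hF]
  · intro s u hu
    have key : ∀ v : unitInterval, f v = g v → c.toFun (F (s, v)) = c.toFun (f v) := by
      intro v hv
      congr 1
      simp only [hF, hv]
      ring
    rcases hu with hu | hu
    · have hu0 : u = 0 := hu
      subst hu0
      show c.toFun (F (s, 0)) = P 0
      rw [key 0 h0, hP 0]
    · have hu1 : u = 1 := hu
      subst hu1
      show c.toFun (F (s, 1)) = P 1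
      rw [key 1 h1, hP 1]

end Reparam

section Subdiv

open CategoryTheory Set

set_option linter.unusedSectionVars false

variable {X : Type*} [MetricSpace X] [Nonempty X] (hJ : ∀ x y : X, Joined x y) (δ : ℝ)

theorem kap_eqToHom_conj {x y : X} (h : (⟨x⟩ : FundamentalGroupoid X) = ⟨y⟩)
    (G : (⟨y⟩ : FundamentalGroupoid X) ⟶ ⟨y⟩) :
    kap hJ δ (eqToHom h ≫ G ≫ eqToHom h.symm) = kap hJ δ G := by
  unfold kap
  rw [kl_eqToHom_conj]

theorem pq_pieceP_trans (c : MLoop X) {a b d : ℝ} (ha : a ∈ Icc (0:ℝ) 1)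
    (hb : b ∈ Icc (0:ℝ) 1) (hd : d ∈ Icc (0:ℝ) 1) (hab : a ≤ b) (hbd : b ≤ d) :
    pq (pieceP c ha hb hab) ≫ pq (pieceP c hb hd hbd) =
      pq (pieceP c ha hd (hab.trans hbd)) := by
  rw [pq_comp]
  apply pq_sound
  set f : unitInterval → ℝ := fun t =>
    if (t:ℝ) ≤ 1/2 then a + (2*(t:ℝ)) * (b - a) else b + (2*(t:ℝ) - 1) * (d - b) with hf
  have hfc : Continuous f := by
    apply Continuous.if_le
    · exact continuous_const.add ((continuous_const.mul continuous_subtype_val).mul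
        continuous_const)
    · exact continuous_const.add (((continuous_const.mul continuous_subtype_val).sub
        continuous_const).mul continuous_const)
    · exact continuous_subtype_val
    · exact continuous_const
    · intro t ht
      rw [ht]
      ring
  refine homotopic_reparam c _ _ f (fun t => a + (t:ℝ) * (d - a)) hfc
    (continuous_const.add (continuous_subtype_val.mul continuous_const)) ?_ ?_ ?_ ?_ ?_ ?_
  · intro t
    simp only [hf]
    split_ifs with h
    · constructor
      · nlinarith [ha.1, t.2.1]
      · nlinarith [hb.2, t.2.1]
    · push_neg at h
      constructor
      · nlinarith [hb.1, t.2.2]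
      · nlinarith [hd.2, t.2.2]
  · intro t
    show a + (t:ℝ) * (d - a) ∈ Icc (0:ℝ) 1
    constructor
    · nlinarith [ha.1, t.2.1]
    · nlinarith [hd.2, t.2.1, t.2.2]
  · intro t
    rw [Path.trans_apply]
    simp only [hf]
    split_ifs with h
    · rfl
    · rfl
  · intro t
    rfl
  · simp [hf]
  · simp only [hf]
    norm_num

theorem pieceP_refl (c : MLoop X) {a : ℝ} (ha : a ∈ Icc (0:ℝ) 1) :
    pieceP c ha ha le_rfl = Path.refl (c.toFun a) := by
  ext t
  show c.toFun (a + (t:ℝ) * (a - a)) = c.toFun a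
  norm_num

theorem chain_pieces (c : MLoop X) (t : ℕ → ℝ) (ht : ∀ i, t i ∈ Icc (0:ℝ) 1)
    (hmono : ∀ i, t i ≤ t (i+1)) :
    ∀ n, chainM (fun i => c.toFun (t i)) (fun i => pq (pieceP c (ht i) (ht (i+1)) (hmono i))) n
      = pq (pieceP c (ht 0) (ht n)
          ((monotone_nat_of_le_succ hmono) (Nat.zero_le n)))
  | 0 => by
    show 𝟙 _ = _
    rw [pieceP_refl]
    rfl
  | (n+1) => by
    show chainM _ _ n ≫ _ = _
    rw [chain_pieces c t ht hmono n, pq_pieceP_trans]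

end Subdiv

section Fine

open Set

set_option linter.unusedSectionVars false

variable {E : Type*} [MetricSpace E]

theorem edist_chain (v : ℕ → E) (k : ℕ) :
    ∀ l, k ≤ l → edist (v k) (v l) ≤ ∑ j ∈ Finset.Ico k l, edist (v j) (v (j+1))
  | 0, h => by
    have : k = 0 := Nat.le_zero.mp h
    subst this
    simp
  | (l+1), h => by
    rcases Nat.lt_or_ge k (l+1) with h' | h'
    · have hk : k ≤ l := Nat.lt_succ_iff.mp h'
      calc edist (v k) (v (l+1)) ≤ edist (v k) (v l) + edist (v l) (v (l+1)) :=
            edist_triangle _ _ _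
        _ ≤ (∑ j ∈ Finset.Ico k l, edist (v j) (v (j+1))) + edist (v l) (v (l+1)) := by
            gcongr
            exact edist_chain v k l hk
        _ = ∑ j ∈ Finset.Ico k (l+1), edist (v j) (v (j+1)) := by
            rw [Finset.sum_Ico_succ_top hk]
    · have : k = l + 1 := le_antisymm h h'
      subst this
      simp

theorem chain_telescope (v : ℕ → E) (n : ℕ → ℕ) (hn : ∀ i, n i ≤ n (i+1)) :
    ∀ p, ∑ i ∈ Finset.range p, (∑ j ∈ Finset.Ico (n i) (n (i+1)), edist (v j) (v (j+1)))
      = ∑ j ∈ Finset.Ico (n 0) (n p), edist (v j) (v (j+1))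
  | 0 => by simp
  | (p+1) => by
    rw [Finset.sum_range_succ, chain_telescope v n hn p,
      Finset.sum_Ico_consecutive]
    · exact (monotone_nat_of_le_succ hn) (Nat.zero_le p)
    · exact hn p

theorem grid_var_sum (f : ℝ → E) {K : ℕ} (hK : 0 < K) :
    ∀ m, m ≤ K → eVariationOn f (Icc 0 ((m:ℝ)/K)) =
      ∑ j ∈ Finset.range m, eVariationOn f (Icc ((j:ℝ)/K) (((j:ℝ)+1)/K))
  | 0, _ => by simp [eVariationOn.subsingleton]
  | (m+1), hm => by
    have hKpos : (0:ℝ) < K := Nat.cast_pos.mpr hK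
    have h1 : (0:ℝ) ≤ (m:ℝ)/K := by positivity
    have h2 : (m:ℝ)/K ≤ ((m:ℝ)+1)/K := by
      apply (div_le_div_iff_of_pos_right hKpos).mpr
      linarith
    rw [Finset.sum_range_succ, ← grid_var_sum f hK m (Nat.le_of_succ_le hm),
      icc_split f h1 h2]
    push_cast
    ring_nf

set_option maxHeartbeats 1000000 in
/-- Existence of a uniform grid on `[0,1]` which is both `η`-fine and on whose cells the
variation of `f` is at most `ε`. -/
theorem exists_fine_grid (f : ℝ → E) (hc : ContinuousOn f (Icc 0 1))
    (hfin : eVariationOn f (Icc 0 1) ≠ ⊤) {ε η : ℝ} (hε : 0 < ε) (hη : 0 < η) :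
    ∃ K : ℕ, 0 < K ∧ (1:ℝ)/K ≤ η ∧
      ∀ j, j < K → eVariationOn f (Icc ((j:ℝ)/K) (((j:ℝ)+1)/K)) ≤ ENNReal.ofReal ε := by
  set V := eVariationOn f (Icc 0 1) with hV
  -- trivial case
  rcases eq_or_ne V 0 with hV0 | hV0
  · refine ⟨⌈1/η⌉₊ + 1, Nat.succ_pos _, ?_, ?_⟩
    · rw [div_le_iff₀ (by positivity)]
      have h2 : (1:ℝ)/η ≤ ((⌈1/η⌉₊ + 1 : ℕ):ℝ) := by
        push_cast
        linarith [Nat.le_ceil (1/η)]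
      calc (1:ℝ) = η * (1/η) := by field_simp
        _ ≤ η * ((⌈1/η⌉₊ + 1 : ℕ):ℝ) := by nlinarith [le_of_lt hη]
    · intro j hj
      set K := ⌈1/η⌉₊ + 1
      have hKpos : (0:ℝ) < K := by positivity
      have hsub : Icc ((j:ℝ)/K) (((j:ℝ)+1)/K) ⊆ Icc 0 1 := by
        apply Icc_subset_Icc
        · positivity
        · rw [div_le_one hKpos]
          have : (j:ℝ) + 1 ≤ K := by exact_mod_cast Nat.succ_le_of_lt hj
          linarith
      calc eVariationOn f (Icc ((j:ℝ)/K) (((j:ℝ)+1)/K)) ≤ V := eVariationOn.mono f hsub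
        _ = 0 := hV0
        _ ≤ ENNReal.ofReal ε := by simp
  -- nontrivial case: get an almost-achieving partition
  have hc3 : (0:ℝ) < ε/3 := by linarith
  have hsub : V - ENNReal.ofReal (ε/3) < V :=
    ENNReal.sub_lt_self hfin hV0 (ENNReal.ofReal_pos.mpr hc3).ne'
  rw [hV, eVariationOn] at hsub
  obtain ⟨⟨p, u, hu, us⟩, hS⟩ := lt_iSup_iff.mp hsub
  rw [← eVariationOn, ← hV] at hS
  set S := ∑ i ∈ Finset.range p, edist (f (u (i+1))) (f (u i)) with hSdef
  have hVS : V ≤ S + ENNReal.ofReal (ε/3) := by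
    rcases le_total V (ENNReal.ofReal (ε/3)) with h | h
    · exact le_trans h (le_add_self)
    · have := ENNReal.sub_lt_iff_lt_right (by simp) h |>.mp hS
      exact this.le
  -- uniform continuity
  set ε' := ε / (3 * (2 * p + 1)) with hε'
  have hε'pos : 0 < ε' := by positivity
  obtain ⟨θ, hθpos, hθ⟩ := Metric.uniformContinuousOn_iff.mp
    (isCompact_Icc.uniformContinuousOn_of_continuous hc) ε' hε'pos
  -- grid size
  set K := ⌈max (1/θ) (1/η)⌉₊ + 1 with hK
  have hKpos : 0 < K := Nat.succ_pos _
  have hKR : (0:ℝ) < K := by positivity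
  have hKθ : (1:ℝ)/K < θ := by
    rw [div_lt_iff₀ hKR]
    have h1 : (1:ℝ)/θ ≤ (⌈max (1/θ) (1/η)⌉₊:ℝ) :=
      le_trans (le_max_left _ _) (Nat.le_ceil _)
    have h2 : (1:ℝ)/θ < (K:ℝ) := by
      rw [hK]; push_cast; linarith
    calc (1:ℝ) = θ * (1/θ) := by field_simp
      _ < θ * K := by
          apply mul_lt_mul_of_pos_left h2 hθpos
  have hKη : (1:ℝ)/K ≤ η := by
    rw [div_le_iff₀ hKR]
    have h1 : (1:ℝ)/η ≤ (⌈max (1/θ) (1/η)⌉₊:ℝ) :=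
      le_trans (le_max_right _ _) (Nat.le_ceil _)
    have h2 : (1:ℝ)/η < (K:ℝ) := by
      rw [hK]; push_cast; linarith
    calc (1:ℝ) = η * (1/η) := by field_simp
      _ ≤ η * K := by nlinarith
  refine ⟨K, hKpos, hKη, ?_⟩
  -- grid points and their properties
  set w : ℕ → ℝ := fun j => (j:ℝ)/K with hw
  have hwmem : ∀ j, j ≤ K → w j ∈ Icc (0:ℝ) 1 := by
    intro j hj
    constructor
    · positivity
    · rw [hw]
      rw [div_le_one hKR]
      exact_mod_cast hj
  have hwstep : ∀ j, w (j+1) - w j = 1/K := by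
    intro j
    rw [hw]
    push_cast
    field_simp
    ring
  -- the grid edge sum
  set G := ∑ j ∈ Finset.range K, edist (f (w (j+1))) (f (w j)) with hG
  -- nearest grid indices for the partition u
  set n : ℕ → ℕ := fun i => ⌊u i * K⌋₊ with hn
  have hnK : ∀ i, n i ≤ K := by
    intro i
    rw [hn]
    have h1 : u i * K ≤ K := by
      have := (us i).2
      nlinarith
    calc ⌊u i * K⌋₊ ≤ ⌊(K:ℝ)⌋₊ := Nat.floor_mono h1
      _ = K := Nat.floor_natCast K
  have hnmono : ∀ i, n i ≤ n (i+1) :=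
    fun i => Nat.floor_mono (by nlinarith [hu (Nat.le_succ i), hKR, (us i).1])
  have hclose : ∀ i, |u i - w (n i)| < θ := by
    intro i
    rw [hw, hn]
    have h0 : 0 ≤ u i * K := by nlinarith [(us i).1]
    have h1 : (⌊u i * K⌋₊ : ℝ) ≤ u i * K := Nat.floor_le h0
    have h2 : u i * K < (⌊u i * K⌋₊ : ℝ) + 1 := Nat.lt_floor_add_one _
    have hb1 : (⌊u i * K⌋₊ : ℝ)/K ≤ u i := by
      rw [div_le_iff₀ hKR]
      nlinarith
    have hb2 : u i - (⌊u i * K⌋₊ : ℝ)/K < 1/K := by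
      rw [sub_lt_iff_lt_add, ← add_div, lt_div_iff₀ hKR]
      nlinarith
    rw [abs_lt]
    constructor
    · linarith
    · linarith
  have hwn_mem : ∀ i, w (n i) ∈ Icc (0:ℝ) 1 := fun i => hwmem (n i) (hnK i)
  have hedge_close : ∀ i, edist (f (u i)) (f (w (n i))) ≤ ENNReal.ofReal ε' := by
    intro i
    rw [edist_dist]
    apply ENNReal.ofReal_le_ofReal
    exact le_of_lt (hθ (u i) (us i) (w (n i)) (hwn_mem i) (by rw [Real.dist_eq]; exact hclose i))
  -- compare S with G
  have hSG : S ≤ G + ENNReal.ofReal (ε/3) := by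
    have hterm : ∀ i, edist (f (u (i+1))) (f (u i)) ≤
        (∑ j ∈ Finset.Ico (n i) (n (i+1)), edist (f (w j)) (f (w (j+1)))) +
          (ENNReal.ofReal ε' + ENNReal.ofReal ε') := by
      intro i
      calc edist (f (u (i+1))) (f (u i))
          ≤ edist (f (u (i+1))) (f (w (n (i+1)))) + edist (f (w (n (i+1)))) (f (w (n i)))
            + edist (f (w (n i))) (f (u i)) := by
            exact edist_triangle4 _ _ _ _
        _ ≤ ENNReal.ofReal ε' + edist (f (w (n i))) (f (w (n (i+1)))) + ENNReal.ofReal ε' := by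
            gcongr
            · exact hedge_close (i+1)
            · rw [edist_comm]
            · rw [edist_comm]
              exact hedge_close i
        _ ≤ ENNReal.ofReal ε' + (∑ j ∈ Finset.Ico (n i) (n (i+1)),
              edist (f (w j)) (f (w (j+1)))) + ENNReal.ofReal ε' := by
            gcongr
            exact edist_chain (fun j => f (w j)) (n i) (n (i+1)) (hnmono i)
        _ = _ := by ring
    calc S ≤ ∑ i ∈ Finset.range p,
        ((∑ j ∈ Finset.Ico (n i) (n (i+1)), edist (f (w j)) (f (w (j+1)))) +
          (ENNReal.ofReal ε' + ENNReal.ofReal ε')) := Finset.sum_le_sum (fun i _ => hterm i)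
      _ = (∑ j ∈ Finset.Ico (n 0) (n p), edist (f (w j)) (f (w (j+1))))
          + p * (ENNReal.ofReal ε' + ENNReal.ofReal ε') := by
          rw [Finset.sum_add_distrib, chain_telescope (fun j => f (w j)) n hnmono p]
          simp only [Finset.sum_const, Finset.card_range, nsmul_eq_mul]
      _ ≤ G + ENNReal.ofReal (ε/3) := by
          gcongr
          · rw [hG]
            have : ∀ j, edist (f (w (j+1))) (f (w j)) = edist (f (w j)) (f (w (j+1))) :=
              fun j => edist_comm _ _
            calc ∑ j ∈ Finset.Ico (n 0) (n p), edist (f (w j)) (f (w (j+1)))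
                ≤ ∑ j ∈ Finset.Ico 0 K, edist (f (w j)) (f (w (j+1))) := by
                  apply Finset.sum_le_sum_of_subset
                  apply Finset.Ico_subset_Ico (Nat.zero_le _) (hnK p)
              _ = ∑ j ∈ Finset.range K, edist (f (w (j+1))) (f (w j)) := by
                  rw [Finset.range_eq_Ico]
                  exact Finset.sum_congr rfl (fun j _ => edist_comm _ _)
          · rw [← ENNReal.ofReal_add hε'pos.le hε'pos.le]
            have hp : ((p:ℝ≥0∞)) = ENNReal.ofReal (p:ℝ) := by
              rw [ENNReal.ofReal_natCast]
            rw [hp, ← ENNReal.ofReal_mul (by positivity)]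
            apply ENNReal.ofReal_le_ofReal
            rw [hε']
            have hd : (0:ℝ) < 3*(2*(p:ℝ)+1) := by positivity
            rw [← add_div, ← mul_div_assoc, div_le_div_iff₀ hd (by norm_num : (0:ℝ) < 3)]
            nlinarith [(by positivity : (0:ℝ) ≤ (p:ℝ)), hε.le]
  -- total comparison
  have hVG : V ≤ G + ENNReal.ofReal (2*ε/3) := by
    calc V ≤ S + ENNReal.ofReal (ε/3) := hVS
      _ ≤ (G + ENNReal.ofReal (ε/3)) + ENNReal.ofReal (ε/3) := by gcongr
      _ = G + ENNReal.ofReal (2*ε/3) := by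
          rw [add_assoc, ← ENNReal.ofReal_add hc3.le hc3.le,
            show ε/3 + ε/3 = 2*ε/3 by ring]
  -- cell variations
  intro j hj
  set v : ℕ → ℝ≥0∞ := fun i => eVariationOn f (Icc (w i) (w (i+1))) with hv
  set d : ℕ → ℝ≥0∞ := fun i => edist (f (w (i+1))) (f (w i)) with hd
  have hwle : ∀ i, w i ≤ w (i+1) := by
    intro i
    have := hwstep i
    have : (0:ℝ) < 1/K := by positivity
    linarith [hwstep i]
  have hVsum : V = ∑ i ∈ Finset.range K, v i := by
    have h1 : ((K:ℝ))/K = 1 := div_self hKR.ne'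
    have := grid_var_sum f hKpos K le_rfl
    rw [h1] at this
    rw [hV, this]
    apply Finset.sum_congr rfl
    intro i _
    rw [hv, hw]
    push_cast
    ring_nf
  have hdv : ∀ i, d i ≤ v i := by
    intro i
    show edist (f (w (i+1))) (f (w i)) ≤ eVariationOn f (Icc (w i) (w (i+1)))
    rw [edist_comm]
    exact eVariationOn.edist_le f (left_mem_Icc.mpr (hwle i)) (right_mem_Icc.mpr (hwle i))
  have hAfin : (∑ i ∈ (Finset.range K).erase j, v i) ≠ ⊤ := by
    intro htop
    apply hfin
    rw [hV] at hVsum ⊢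
    rw [hVsum]
    rw [← Finset.add_sum_erase _ v (Finset.mem_range.mpr hj)]
    rw [htop]
    simp
  have hGsum : G = ∑ i ∈ Finset.range K, d i := rfl
  have hkey : v j + (∑ i ∈ (Finset.range K).erase j, v i) ≤
      (d j + ENNReal.ofReal (2*ε/3)) + (∑ i ∈ (Finset.range K).erase j, v i) := by
    calc v j + (∑ i ∈ (Finset.range K).erase j, v i)
        = V := by rw [hVsum, Finset.add_sum_erase _ v (Finset.mem_range.mpr hj)]
      _ ≤ G + ENNReal.ofReal (2*ε/3) := hVG
      _ = (d j + (∑ i ∈ (Finset.range K).erase j, d i)) + ENNReal.ofReal (2*ε/3) := by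
          rw [hGsum, Finset.add_sum_erase _ d (Finset.mem_range.mpr hj)]
      _ ≤ (d j + (∑ i ∈ (Finset.range K).erase j, v i)) + ENNReal.ofReal (2*ε/3) := by
          gcongr with i hi
          exact hdv i
      _ = (d j + ENNReal.ofReal (2*ε/3)) + (∑ i ∈ (Finset.range K).erase j, v i) := by
          ring
  have hvj : v j ≤ d j + ENNReal.ofReal (2*ε/3) :=
    (ENNReal.add_le_add_iff_right hAfin).mp hkey
  have hdj : d j ≤ ENNReal.ofReal ε' := by
    show edist (f (w (j+1))) (f (w j)) ≤ ENNReal.ofReal ε'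
    rw [edist_dist]
    apply ENNReal.ofReal_le_ofReal
    apply le_of_lt
    apply hθ _ (hwmem (j+1) (Nat.succ_le_of_lt hj)) _ (hwmem j (Nat.le_of_lt hj))
    rw [Real.dist_eq, hwstep j]
    rw [abs_of_pos (by positivity)]
    exact hKθ
  have goal_eq : eVariationOn f (Icc ((j:ℝ)/K) (((j:ℝ)+1)/K)) = v j := by
    rw [hv, hw]
    push_cast
    ring_nf
  rw [goal_eq]
  calc v j ≤ ENNReal.ofReal ε' + ENNReal.ofReal (2*ε/3) := le_trans hvj (by gcongr)
    _ = ENNReal.ofReal (ε' + 2*ε/3) := by rw [← ENNReal.ofReal_add hε'pos.le (by positivity)]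
    _ ≤ ENNReal.ofReal ε := by
        apply ENNReal.ofReal_le_ofReal
        have h3 : ε' ≤ ε/3 := by
          rw [hε']
          apply div_le_div_of_nonneg_left hε.le (by norm_num)
          nlinarith [(by positivity : (0:ℝ) ≤ (p:ℝ))]
        linarith

end Fine

section Kill

open CategoryTheory Set

set_option linter.unusedSectionVars false

variable {X : Type*} [MetricSpace X] [Nonempty X] (hJ : ∀ x y : X, Joined x y)
  (hX : IsGeodesicSpace X) (δ : ℝ)

theorem evar_pair_le (f g : ℝ → X) (s : Set ℝ) :
    eVariationOn (fun t => (f t, g t)) s ≤ eVariationOn f s + eVariationOn g s := by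
  rw [eVariationOn]
  apply iSup_le
  rintro ⟨n, ⟨u, hu, us⟩⟩
  calc ∑ i ∈ Finset.range n, edist (f (u (i+1)), g (u (i+1))) (f (u i), g (u i))
      ≤ ∑ i ∈ Finset.range n,
        (edist (f (u (i+1))) (f (u i)) + edist (g (u (i+1))) (g (u i))) := by
        apply Finset.sum_le_sum
        intro i _
        rw [Prod.edist_eq]
        exact max_le (le_add_right le_rfl) (le_add_left le_rfl)
    _ = (∑ i ∈ Finset.range n, edist (f (u (i+1))) (f (u i)))
        + ∑ i ∈ Finset.range n, edist (g (u (i+1))) (g (u i)) := Finset.sum_add_distrib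
    _ ≤ _ := by
        gcongr
        · exact eVariationOn.sum_le (f := f) (n := n) hu us
        · exact eVariationOn.sum_le (f := g) (n := n) hu us

theorem evar_fst_le (f g : ℝ → X) (s : Set ℝ) :
    eVariationOn f s ≤ eVariationOn (fun t => (f t, g t)) s := by
  rw [eVariationOn]
  apply iSup_le
  rintro ⟨n, ⟨u, hu, us⟩⟩
  apply le_trans _ (eVariationOn.sum_le (f := fun t => (f t, g t)) (n := n) hu us)
  apply Finset.sum_le_sum
  intro i _
  rw [Prod.edist_eq]
  exact le_max_left _ _

theorem evar_snd_le (f g : ℝ → X) (s : Set ℝ) :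
    eVariationOn g s ≤ eVariationOn (fun t => (f t, g t)) s := by
  rw [eVariationOn]
  apply iSup_le
  rintro ⟨n, ⟨u, hu, us⟩⟩
  apply le_trans _ (eVariationOn.sum_le (f := fun t => (f t, g t)) (n := n) hu us)
  apply Finset.sum_le_sum
  intro i _
  rw [Prod.edist_eq]
  exact le_max_right _ _

theorem dist_le_of_evar (c : MLoop X) {a b : ℝ} (hab : a ≤ b) {r : ℝ} (hr : 0 ≤ r)
    (h : eVariationOn c.toFun (Icc a b) ≤ ENNReal.ofReal r) :
    dist (c.toFun a) (c.toFun b) ≤ r := by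
  have := le_trans (edist_le_evar c hab) h
  rw [edist_dist] at this
  exact (ENNReal.ofReal_le_ofReal_iff hr).mp this

theorem quad_kill (p q r s : X)
    (h : dist p q + dist q r + dist s r + dist p s ≤ 10*δ) :
    kap hJ δ (pq (geo hX p q) ≫ pq (geo hX q r) ≫
      inv (pq (geo hX s r)) ≫ inv (pq (geo hX p s))) = 0 := by
  rw [pq_inv, pq_inv, pq_comp, pq_comp, pq_comp]
  apply kap_kill
  calc pvar ((geo hX p q).trans ((geo hX q r).trans ((geo hX s r).symm.trans
      (geo hX p s).symm)))
      ≤ pvar (geo hX p q) + (pvar (geo hX q r) + (pvar (geo hX s r).symm +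
        pvar (geo hX p s).symm)) := by
        refine le_trans (pvar_trans _ _) ?_
        gcongr
        refine le_trans (pvar_trans _ _) ?_
        gcongr
        exact pvar_trans _ _
    _ ≤ ENNReal.ofReal (dist p q) + (ENNReal.ofReal (dist q r) +
        (ENNReal.ofReal (dist s r) + ENNReal.ofReal (dist p s))) := by
        gcongr
        · exact pvar_geo hX p q
        · exact pvar_geo hX q r
        · exact le_trans (pvar_symm _) (pvar_geo hX s r)
        · exact le_trans (pvar_symm _) (pvar_geo hX p s)
    _ = ENNReal.ofReal (dist p q + (dist q r + (dist s r + dist p s))) := by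
        rw [← ENNReal.ofReal_add dist_nonneg dist_nonneg,
          ← ENNReal.ofReal_add dist_nonneg (by positivity),
          ← ENNReal.ofReal_add dist_nonneg (by positivity)]
    _ ≤ ENNReal.ofReal (10 * δ) := ENNReal.ofReal_le_ofReal (by linarith)

theorem bigon_kill (c : MLoop X) {a b : ℝ} (ha : a ∈ Icc (0:ℝ) 1) (hb : b ∈ Icc (0:ℝ) 1)
    (hab : a ≤ b) (hδ : 0 ≤ δ)
    (h : eVariationOn c.toFun (Icc a b) ≤ ENNReal.ofReal (5*δ)) :
    kap hJ δ (pq (pieceP c ha hb hab) ≫ inv (pq (geo hX (c.toFun a) (c.toFun b)))) = 0 := by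
  rw [pq_inv, pq_comp]
  apply kap_kill
  have hd : dist (c.toFun a) (c.toFun b) ≤ 5*δ := dist_le_of_evar c hab (by linarith) h
  calc pvar ((pieceP c ha hb hab).trans (geo hX (c.toFun a) (c.toFun b)).symm)
      ≤ pvar (pieceP c ha hb hab) + pvar (geo hX (c.toFun a) (c.toFun b)).symm :=
        pvar_trans _ _
    _ ≤ ENNReal.ofReal (5*δ) + ENNReal.ofReal (5*δ) := by
        gcongr
        · exact le_trans (pvar_pieceP c ha hb hab) h
        · exact le_trans (pvar_symm _) (le_trans (pvar_geo hX _ _)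
            (ENNReal.ofReal_le_ofReal hd))
    _ = ENNReal.ofReal (10 * δ) := by
        rw [← ENNReal.ofReal_add (by linarith) (by linarith)]
        congr 1
        ring

theorem pq_geo_congr {x y x' y' : X} (hx : x = x') (hy : y = y') :
    pq (geo hX x y) = eqToHom (by rw [hx]) ≫ pq (geo hX x' y') ≫ eqToHom (by rw [hy]) := by
  subst hx hy
  simp

end Kill

section LoopChain

open CategoryTheory Set

set_option linter.unusedSectionVars false

variable {X : Type*} [MetricSpace X] [Nonempty X] (hJ : ∀ x y : X, Joined x y) (δ : ℝ)

theorem loop_chain_kap (c : MLoop X) (t : ℕ → ℝ) (ht : ∀ i, t i ∈ Icc (0:ℝ) 1)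
    (hmono : ∀ i, t i ≤ t (i+1)) (n : ℕ) (h0 : t 0 = 0) (h1 : t n = 1)
    (e : (⟨c.toFun (t n)⟩ : FundamentalGroupoid X) = ⟨c.toFun (t 0)⟩) :
    kap hJ δ (pq c.path) =
      kap hJ δ (chainM (fun i => c.toFun (t i))
        (fun i => pq (pieceP c (ht i) (ht (i+1)) (hmono i))) n ≫ eqToHom e) := by
  rw [chain_pieces]
  have ha : c.toFun 0 = c.toFun (t 0) := by rw [h0]
  have hb : c.toFun 0 = c.toFun (t n) := by rw [h1, c.closed]
  have hfun : ∀ u : unitInterval,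
      c.path u = (pieceP c (ht 0) (ht n) ((monotone_nat_of_le_succ hmono) (Nat.zero_le n))) u := by
    intro u
    show c.toFun u = c.toFun (t 0 + (u:ℝ) * (t n - t 0))
    rw [h0, h1]
    norm_num
  rw [pq_congr c.path (pieceP c (ht 0) (ht n) _) ha hb hfun]
  have g1 : (⟨c.toFun 0⟩ : FundamentalGroupoid X) = ⟨c.toFun (t 0)⟩ := by rw [ha]
  have hr : eqToHom g1 ≫ pq (pieceP c (ht 0) (ht n)
        ((monotone_nat_of_le_succ hmono) (Nat.zero_le n))) ≫ eqToHom (by rw [hb]) =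
      eqToHom g1 ≫ (pq (pieceP c (ht 0) (ht n)
        ((monotone_nat_of_le_succ hmono) (Nat.zero_le n))) ≫ eqToHom e) ≫ eqToHom g1.symm := by
    simp
  rw [hr, kap_eqToHom_conj]

end LoopChain
/-- If two rectifiable loops of `M` admit `δ`-approximating loops in `N`
that are freely homotopic in `N`, then `[[γ₀]] - [[γ₁]] ∈ H₁^δ(M;ℤ)`. -/
theorem statement_3 {M N : Type*} [MetricSpace M] [MetricSpace N]
    [CompactSpace M] [CompactSpace N] [Nonempty M]
    (hM : IsGeodesicSpace M) (hN : IsGeodesicSpace N)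
    (δ : ℝ) (hδ : 0 < δ) (Φ : M → N)
    (hΦ : ∀ x y : M, |dist (Φ x) (Φ y) - dist x y| < δ / 10)
    (hdense : ∀ z : N, ∃ x : M, dist z (Φ x) ≤ δ / 10)
    (γ₀ γ₁ : MLoop M) (h₀ : γ₀.length ≠ ⊤) (h₁ : γ₁.length ≠ ⊤)
    (γb₀ γb₁ : MLoop N)
    (hap₀ : IsApproxLoop Φ δ γ₀ γb₀) (hap₁ : IsApproxLoop Φ δ γ₁ γb₁)
    (hhom : γb₀.FreelyHomotopic γb₁) :
    γ₀.h1 - γ₁.h1 ∈ H1short M δ := by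
  open CategoryTheory in
  classical
  obtain ⟨H, Hcont, Hb0, Hb1, Hloop⟩ := hhom
  have hJ : ∀ x y : M, Joined x y := fun x y => joined_of_geodesic hM x y
  choose pick hpick using hdense
  have hMN : ∀ x y : M, dist x y ≤ dist (Φ x) (Φ y) + δ/10 := by
    intro x y
    have h := abs_lt.mp (hΦ x y)
    linarith [h.1]
  obtain ⟨η, hηpos, hη⟩ := Metric.uniformContinuousOn_iff.mp
    ((isCompact_Icc.prod isCompact_Icc).uniformContinuousOn_of_continuous Hcont) δ hδ
  have hGcont : ContinuousOn (fun u : ℝ => (γ₀.toFun u, γ₁.toFun u)) (Set.Icc 0 1) :=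
    γ₀.continuousOn.prodMk γ₁.continuousOn
  have hGfin : eVariationOn (fun u : ℝ => (γ₀.toFun u, γ₁.toFun u)) (Set.Icc 0 1) ≠ ⊤ := by
    intro htop
    have hle := evar_pair_le γ₀.toFun γ₁.toFun (Set.Icc 0 1)
    rw [htop, top_le_iff] at hle
    exact (ENNReal.add_ne_top.mpr ⟨h₀, h₁⟩) hle
  obtain ⟨K, hKpos, hKη, hKvar⟩ := exists_fine_grid _ hGcont hGfin
    (ε := δ/10) (η := η/2) (by linarith) (by linarith)
  have hKR : (0:ℝ) < K := Nat.cast_pos.mpr hKpos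
  set T : ℕ → ℝ := fun j => min ((j:ℝ)/K) 1 with hT
  have hTmem : ∀ j, T j ∈ Set.Icc (0:ℝ) 1 := fun j =>
    ⟨le_min (by positivity) zero_le_one, min_le_right _ _⟩
  have hTmono : ∀ j, T j ≤ T (j+1) := by
    intro j
    apply min_le_min _ le_rfl
    gcongr
    push_cast
    linarith
  have hTeq : ∀ j, j ≤ K → T j = (j:ℝ)/K := by
    intro j hj
    apply min_eq_left
    rw [div_le_one hKR]
    exact_mod_cast hj
  have hT0 : T 0 = 0 := by simp [hT]
  have hTK : T K = 1 := by
    rw [hTeq K le_rfl, div_self hKR.ne']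
  have hTstep : ∀ j, T (j+1) - T j ≤ 1/K := by
    intro j
    have hc : ((j+1:ℕ):ℝ)/K = (j:ℝ)/K + 1/K := by push_cast; ring
    have h1 : T (j+1) ≤ min ((j:ℝ)/K + 1/K) (1 + 1/K) := by
      have h0K : (0:ℝ) ≤ 1/K := by positivity
      apply min_le_min (le_of_eq hc) (by linarith)
    rw [min_add_add_right] at h1
    show T (j+1) - min ((j:ℝ)/K) 1 ≤ 1/K
    linarith [h1]
  have hTadj1 : ∀ j, |T (j+1) - T j| ≤ 1/K := by
    intro j
    rw [abs_of_nonneg (by linarith [hTmono j])]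
    exact hTstep j
  have hTadj0 : ∀ j : ℕ, |T j - T j| ≤ 1/K := by
    intro j
    simp only [sub_self, abs_zero]
    positivity
  have hvar0 : ∀ j, j < K → eVariationOn γ₀.toFun (Set.Icc (T j) (T (j+1))) ≤
      ENNReal.ofReal (δ/10) := by
    intro j hj
    rw [hTeq j hj.le, hTeq (j+1) hj]
    have hcast : ((j+1:ℕ):ℝ)/K = ((j:ℝ)+1)/K := by push_cast; ring
    rw [hcast]
    exact le_trans (evar_fst_le γ₀.toFun γ₁.toFun _) (hKvar j hj)
  have hvar1 : ∀ j, j < K → eVariationOn γ₁.toFun (Set.Icc (T j) (T (j+1))) ≤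
      ENNReal.ofReal (δ/10) := by
    intro j hj
    rw [hTeq j hj.le, hTeq (j+1) hj]
    have hcast : ((j+1:ℕ):ℝ)/K = ((j:ℝ)+1)/K := by push_cast; ring
    rw [hcast]
    exact le_trans (evar_snd_le γ₀.toFun γ₁.toFun _) (hKvar j hj)
  set x : ℕ → ℕ → M := fun k j => pick (H (T k, T j)) with hx
  have hxclose : ∀ k, x k K = x k 0 := by
    intro k
    show pick (H (T k, T K)) = pick (H (T k, T 0))
    rw [hTK, hT0, ← Hloop (T k) (hTmem k)]
  have hpickdist : ∀ z z' : N, dist (pick z) (pick z') ≤ dist z z' + 3*(δ/10) := by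
    intro z z'
    have h1 := hMN (pick z) (pick z')
    have h2 := hpick z
    have h3 := hpick z'
    have h4 : dist (Φ (pick z)) (Φ (pick z')) ≤
        dist (Φ (pick z)) z + dist z z' + dist z' (Φ (pick z')) := dist_triangle4 _ _ _ _
    rw [dist_comm (Φ (pick z)) z] at h4
    linarith
  have hHadj : ∀ a b a' b' : ℕ, |T a' - T a| ≤ 1/K → |T b' - T b| ≤ 1/K →
      dist (H (T a, T b)) (H (T a', T b')) < δ := by
    intro a b a' b' h1 h2
    apply hη _ (Set.mem_prod.mpr ⟨hTmem a, hTmem b⟩) _ (Set.mem_prod.mpr ⟨hTmem a', hTmem b'⟩)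
    rw [Prod.dist_eq]
    have hKη2 : (1:ℝ)/K < η := by linarith
    apply max_lt
    · rw [Real.dist_eq]
      calc |T a - T a'| = |T a' - T a| := abs_sub_comm _ _
        _ ≤ 1/K := h1
        _ < η := hKη2
    · rw [Real.dist_eq]
      calc |T b - T b'| = |T b' - T b| := abs_sub_comm _ _
        _ ≤ 1/K := h2
        _ < η := hKη2
  have hxd : ∀ a b a' b' : ℕ, |T a' - T a| ≤ 1/K → |T b' - T b| ≤ 1/K →
      dist (x a b) (x a' b') ≤ 13*δ/10 := by
    intro a b a' b' h1 h2
    calc dist (x a b) (x a' b') ≤ dist (H (T a, T b)) (H (T a', T b')) + 3*(δ/10) :=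
          hpickdist _ _
      _ ≤ 13*δ/10 := by linarith [hHadj a b a' b' h1 h2]
  have h0x : ∀ j, dist (γ₀.toFun (T j)) (x 0 j) ≤ 12*δ/10 := by
    intro j
    have hb : H (T 0, T j) = γb₀.toFun (T j) := by rw [hT0]; exact Hb0 (T j) (hTmem j)
    have hap := hap₀ (T j) (hTmem j)
    have h2 := hpick (H (T 0, T j))
    rw [hb] at h2
    calc dist (γ₀.toFun (T j)) (x 0 j)
        ≤ dist (Φ (γ₀.toFun (T j))) (Φ (x 0 j)) + δ/10 := hMN _ _
      _ ≤ (dist (Φ (γ₀.toFun (T j))) (γb₀.toFun (T j)) +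
          dist (γb₀.toFun (T j)) (Φ (x 0 j))) + δ/10 := by
          gcongr
          exact dist_triangle _ _ _
      _ ≤ 12*δ/10 := by
          have e1 : dist (Φ (γ₀.toFun (T j))) (γb₀.toFun (T j)) < δ := by
            rw [dist_comm]; exact hap
          have e2 : dist (γb₀.toFun (T j)) (Φ (x 0 j)) ≤ δ/10 := by
            have hxd : x 0 j = pick (H (T 0, T j)) := rfl
            rw [hxd, ← hb]
            exact hpick _
          linarith [e1, e2]
  have h1x : ∀ j, dist (γ₁.toFun (T j)) (x K j) ≤ 12*δ/10 := by
    intro j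
    have hb : H (T K, T j) = γb₁.toFun (T j) := by rw [hTK]; exact Hb1 (T j) (hTmem j)
    have hap := hap₁ (T j) (hTmem j)
    have h2 := hpick (H (T K, T j))
    rw [hb] at h2
    calc dist (γ₁.toFun (T j)) (x K j)
        ≤ dist (Φ (γ₁.toFun (T j))) (Φ (x K j)) + δ/10 := hMN _ _
      _ ≤ (dist (Φ (γ₁.toFun (T j))) (γb₁.toFun (T j)) +
          dist (γb₁.toFun (T j)) (Φ (x K j))) + δ/10 := by
          gcongr
          exact dist_triangle _ _ _
      _ ≤ 12*δ/10 := by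
          have e1 : dist (Φ (γ₁.toFun (T j))) (γb₁.toFun (T j)) < δ := by
            rw [dist_comm]; exact hap
          have e2 : dist (γb₁.toFun (T j)) (Φ (x K j)) ≤ δ/10 := by
            have hxd : x K j = pick (H (T K, T j)) := rfl
            rw [hxd, ← hb]
            exact hpick _
          linarith [e1, e2]
  have hd00 : ∀ j, j < K → dist (γ₀.toFun (T j)) (γ₀.toFun (T (j+1))) ≤ δ/10 := by
    intro j hj
    exact dist_le_of_evar γ₀ (hTmono j) (by linarith) (hvar0 j hj)
  have hd11 : ∀ j, j < K → dist (γ₁.toFun (T j)) (γ₁.toFun (T (j+1))) ≤ δ/10 := by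
    intro j hj
    exact dist_le_of_evar γ₁ (hTmono j) (by linarith) (hvar1 j hj)
  -- the central chain of equalities
  have e0p : (⟨γ₀.toFun (T K)⟩ : FundamentalGroupoid M) = ⟨γ₀.toFun (T 0)⟩ := by
    rw [hTK, hT0, γ₀.closed]
  have e1p : (⟨γ₁.toFun (T K)⟩ : FundamentalGroupoid M) = ⟨γ₁.toFun (T 0)⟩ := by
    rw [hTK, hT0, γ₁.closed]
  have hp0 : γ₀.toFun (T K) = γ₀.toFun (T 0) := by rw [hTK, hT0, γ₀.closed]
  have hp1 : γ₁.toFun (T K) = γ₁.toFun (T 0) := by rw [hTK, hT0, γ₁.closed]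
  have er : ∀ k, (⟨x k K⟩ : FundamentalGroupoid M) = ⟨x k 0⟩ := fun k => by rw [hxclose k]
  have hrow : ∀ k, kap hJ δ (chainM (fun j => x 0 j)
        (fun j => pq (geo hM (x 0 j) (x 0 (j+1)))) K ≫ eqToHom (er 0)) =
      kap hJ δ (chainM (fun j => x k j)
        (fun j => pq (geo hM (x k j) (x k (j+1)))) K ≫ eqToHom (er k)) := by
    intro k
    induction k with
    | zero => rfl
    | succ k ih =>
      refine ih.trans ?_
      apply compare_closed hJ δ (fun j => x k j) (fun j => x (k+1) j) _ _
        (fun j => pq (geo hM (x k j) (x (k+1) j))) K (hxclose k) (hxclose (k+1))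
        (pq_geo_congr hM (hxclose k) (hxclose (k+1)))
      intro i hi
      apply quad_kill hJ hM δ
      have e1 := hxd k i k (i+1) (hTadj0 k) (hTadj1 i)
      have e2 := hxd k (i+1) (k+1) (i+1) (hTadj1 k) (hTadj0 (i+1))
      have e3 := hxd (k+1) i (k+1) (i+1) (hTadj0 (k+1)) (hTadj1 i)
      have e4 := hxd k i (k+1) i (hTadj1 k) (hTadj0 i)
      linarith
  have hbig : kap hJ δ (pq γ₀.path) = kap hJ δ (pq γ₁.path) := by
    calc kap hJ δ (pq γ₀.path)
        = kap hJ δ (chainM (fun j => γ₀.toFun (T j))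
            (fun j => pq (pieceP γ₀ (hTmem j) (hTmem (j+1)) (hTmono j))) K ≫ eqToHom e0p) :=
          loop_chain_kap hJ δ γ₀ T hTmem hTmono K hT0 hTK e0p
      _ = kap hJ δ (chainM (fun j => γ₀.toFun (T j))
            (fun j => pq (geo hM (γ₀.toFun (T j)) (γ₀.toFun (T (j+1))))) K ≫ eqToHom e0p) := by
          apply compare_closed hJ δ _ _ _ _ (fun j => 𝟙 _) K hp0 hp0 (by simp)
          intro i hi
          have hsimp : pq (pieceP γ₀ (hTmem i) (hTmem (i+1)) (hTmono i)) ≫ 𝟙 _ ≫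
              inv (pq (geo hM (γ₀.toFun (T i)) (γ₀.toFun (T (i+1))))) ≫ inv (𝟙 _) =
              pq (pieceP γ₀ (hTmem i) (hTmem (i+1)) (hTmono i)) ≫
              inv (pq (geo hM (γ₀.toFun (T i)) (γ₀.toFun (T (i+1))))) := by simp
          rw [hsimp]
          exact bigon_kill hJ hM δ γ₀ (hTmem i) (hTmem (i+1)) (hTmono i) hδ.le
            (le_trans (hvar0 i hi) (ENNReal.ofReal_le_ofReal (by linarith)))
      _ = kap hJ δ (chainM (fun j => x 0 j)
            (fun j => pq (geo hM (x 0 j) (x 0 (j+1)))) K ≫ eqToHom (er 0)) := by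
          apply compare_closed hJ δ _ _ _ _
            (fun j => pq (geo hM (γ₀.toFun (T j)) (x 0 j))) K hp0 (hxclose 0)
            (pq_geo_congr hM hp0 (hxclose 0))
          intro i hi
          apply quad_kill hJ hM δ
          have e1 := hd00 i hi
          have e2 := h0x (i+1)
          have e3 := hxd 0 i 0 (i+1) (hTadj0 0) (hTadj1 i)
          have e4 := h0x i
          linarith
      _ = kap hJ δ (chainM (fun j => x K j)
            (fun j => pq (geo hM (x K j) (x K (j+1)))) K ≫ eqToHom (er K)) := hrow K
      _ = kap hJ δ (chainM (fun j => γ₁.toFun (T j))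
            (fun j => pq (geo hM (γ₁.toFun (T j)) (γ₁.toFun (T (j+1))))) K ≫ eqToHom e1p) := by
          apply compare_closed hJ δ _ _ _ _
            (fun j => pq (geo hM (x K j) (γ₁.toFun (T j)))) K (hxclose K) hp1
            (pq_geo_congr hM (hxclose K) hp1)
          intro i hi
          apply quad_kill hJ hM δ
          have e1 := hxd K i K (i+1) (hTadj0 K) (hTadj1 i)
          have e2 : dist (x K (i+1)) (γ₁.toFun (T (i+1))) ≤ 12*δ/10 := by
            rw [dist_comm]; exact h1x (i+1)
          have e3 := hd11 i hi
          have e4 : dist (x K i) (γ₁.toFun (T i)) ≤ 12*δ/10 := by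
            rw [dist_comm]; exact h1x i
          linarith
      _ = kap hJ δ (chainM (fun j => γ₁.toFun (T j))
            (fun j => pq (pieceP γ₁ (hTmem j) (hTmem (j+1)) (hTmono j))) K ≫ eqToHom e1p) := by
          apply compare_closed hJ δ _ _ _ _ (fun j => 𝟙 _) K hp1 hp1 (by simp)
          intro i hi
          have hsimp : pq (geo hM (γ₁.toFun (T i)) (γ₁.toFun (T (i+1)))) ≫ 𝟙 _ ≫
              inv (pq (pieceP γ₁ (hTmem i) (hTmem (i+1)) (hTmono i))) ≫ inv (𝟙 _) =
              inv (pq (pieceP γ₁ (hTmem i) (hTmem (i+1)) (hTmono i)) ≫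
                inv (pq (geo hM (γ₁.toFun (T i)) (γ₁.toFun (T (i+1)))))) := by simp
          rw [hsimp, kap_inv]
          rw [bigon_kill hJ hM δ γ₁ (hTmem i) (hTmem (i+1)) (hTmono i) hδ.le
            (le_trans (hvar1 i hi) (ENNReal.ofReal_le_ofReal (by linarith)))]
          exact neg_zero
      _ = kap hJ δ (pq γ₁.path) :=
          (loop_chain_kap hJ δ γ₁ T hTmem hTmono K hT0 hTK e1p).symm
  -- conclusion
  have hmk : QuotientAddGroup.mk' (H1short M δ) γ₀.h1 =
      QuotientAddGroup.mk' (H1short M δ) γ₁.h1 := by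
    rw [h1_eq_kl hJ γ₀, h1_eq_kl hJ γ₁]
    exact hbig
  rw [QuotientAddGroup.mk'_apply, QuotientAddGroup.mk'_apply, QuotientAddGroup.eq] at hmk
  have := (H1short M δ).neg_mem hmk
  simpa [neg_add_rev, neg_neg, sub_eq_add_neg, add_comm] using this
end

section
/- For every rectifiable loop c based at p whose image is contained in the open metric ball B(p, δ), the homotopy class [c] ∈ π₁(X, p) can be written as a finite product of homotopy classes of loops based at p, each of length strictly less than 2δ. -/
open Metric Set
open scoped ENNReal unitInterval

attribute [local instance] Path.Homotopic.setoid

/-- The length of a `Path`, as its total variation. -/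
noncomputable def pathLength {X : Type*} [MetricSpace X] {x y : X} (γ : Path x y) : ℝ≥0∞ :=
  eVariationOn (fun t : unitInterval => γ t) Set.univ

/-- The homotopy class in the fundamental group of a loop based at `p`. -/
noncomputable def basedLoopClass {X : Type*} [TopologicalSpace X] {p : X} (γ : Path p p) :
    FundamentalGroup X p :=
  FundamentalGroup.ofLoop ⟦γ⟧


section AuxiliaryLemmas

open CategoryTheory

variable {X : Type*} [MetricSpace X]

lemma exists_right_small_var (f : ℝ → X) (hf : Continuous f) {x b : ℝ} (hxb : x < b)
    (hfin : eVariationOn f (Icc x b) ≠ ⊤) {ε : ℝ} (hε : 0 < ε) :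
    ∃ d, x < d ∧ d ≤ b ∧ eVariationOn f (Icc x d) ≤ ENNReal.ofReal ε := by
  classical
  set W := eVariationOn f (Icc x b) with hW
  by_cases hWε : W ≤ ENNReal.ofReal ε
  · exact ⟨b, hxb, le_rfl, hWε⟩
  have hW0 : W ≠ 0 := fun h => hWε (h ▸ (zero_le : (0:ℝ≥0∞) ≤ _))
  -- continuity of f at x: pick d₀
  obtain ⟨η, hη, hcont⟩ : ∃ η > 0, ∀ y, |y - x| < η → dist (f y) (f x) ≤ ε / 4 := by
    obtain ⟨η, hη, h⟩ := Metric.continuous_iff.mp hf x (ε / 4) (by positivity)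
    exact ⟨η, hη, fun y hy => (h y (by simpa [Real.dist_eq] using hy)).le⟩
  set d₀ : ℝ := min b (x + η / 2) with hd₀
  have hxd₀ : x < d₀ := lt_min hxb (by linarith)
  have hcont' : ∀ y ∈ Icc x d₀, edist (f y) (f x) ≤ ENNReal.ofReal (ε / 4) := by
    intro y hy
    rw [edist_dist]
    refine ENNReal.ofReal_le_ofReal (hcont y ?_)
    rw [abs_sub_lt_iff]
    constructor
    · have := hy.2; have := min_le_right b (x + η/2); linarith
    · have := hy.1; linarith
  -- choose a partition nearly achieving W
  have hWlt : W - ENNReal.ofReal (ε / 4) < W :=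
    ENNReal.sub_lt_self hfin hW0 (by positivity)
  rw [hW] at hWlt
  conv at hWlt => rw [eVariationOn]
  obtain ⟨⟨n, u, hu, us⟩, hS⟩ := lt_iSup_iff.mp hWlt
  set S := ∑ i ∈ Finset.range n, edist (f (u (i + 1))) (f (u i)) with hSdef
  have hWS : W ≤ S + ENNReal.ofReal (ε / 4) := tsub_le_iff_right.mp hS.le
  by_cases hex : ∃ i, x < u i
  case neg =>
    -- all partition points equal x, so S = 0, contradiction-ish: W small
    exfalso
    have : S = 0 := by
      apply Finset.sum_eq_zero
      intro i _
      have h1 : u i = x := le_antisymm (not_lt.mp (fun h => hex ⟨i, h⟩)) (us i).1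
      have h2 : u (i+1) = x := le_antisymm (not_lt.mp (fun h => hex ⟨i+1, h⟩)) (us (i+1)).1
      rw [h1, h2, edist_self]
    rw [this, zero_add] at hWS
    exact hWε (hWS.trans (ENNReal.ofReal_le_ofReal (by linarith)))
  case pos =>
    set i₀ := Nat.find hex with hi₀
    have hxc : x < u i₀ := Nat.find_spec hex
    set d : ℝ := min d₀ (u i₀) with hd
    have hxd : x < d := lt_min hxd₀ hxc
    have hdb : d ≤ b := le_trans (min_le_left _ _) (min_le_left _ _)
    have hdd₀ : d ≤ d₀ := min_le_left _ _
    have hdc : d ≤ u i₀ := min_le_right _ _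
    set u' : ℕ → ℝ := fun i => max (u i) d with hu'
    have hu'mono : Monotone u' := fun i j hij => max_le_max (hu hij) le_rfl
    have hu'mem : ∀ i, u' i ∈ Icc d b := fun i =>
      ⟨le_max_right _ _, max_le (us i).2 hdb⟩
    set S' := ∑ i ∈ Finset.range n, edist (f (u' (i + 1))) (f (u' i)) with hS'def
    have hterm : ∀ i ∈ Finset.range n,
        edist (f (u (i + 1))) (f (u i)) ≤
          edist (f (u' (i + 1))) (f (u' i)) +
            (if i + 1 = i₀ then ENNReal.ofReal (ε / 4) else 0) := by
      intro i _
      by_cases hxi : x < u i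
      · have hle : i₀ ≤ i := Nat.find_min' hex hxi
        have h1 : u' i = u i := max_eq_left (hdc.trans (hu hle))
        have h2 : u' (i+1) = u (i+1) := max_eq_left (hdc.trans (hu (hle.trans i.le_succ)))
        rw [h1, h2]
        exact le_self_add
      · have hui : u i = x := le_antisymm (not_lt.mp hxi) (us i).1
        by_cases hxi1 : x < u (i+1)
        · have hle : i₀ ≤ i + 1 := Nat.find_min' hex hxi1
          have hii : i < i₀ := by
            by_contra h
            exact hxi (lt_of_lt_of_le hxc (hu (not_lt.mp h)))
          have hi0 : i + 1 = i₀ := le_antisymm hii hle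
          have h2 : u' (i+1) = u (i+1) := max_eq_left (hdc.trans (hu hle))
          have h1 : u' i = d := max_eq_right (hui ▸ hxd.le)
          rw [h1, h2, if_pos hi0, hui]
          calc edist (f (u (i+1))) (f x)
              ≤ edist (f (u (i+1))) (f d) + edist (f d) (f x) := edist_triangle _ _ _
            _ ≤ _ := add_le_add le_rfl (hcont' d ⟨hxd.le, hdd₀⟩)
        · have hui1 : u (i+1) = x := le_antisymm (not_lt.mp hxi1) (us (i+1)).1
          rw [hui, hui1, edist_self]
          exact zero_le
    have hSS' : S ≤ S' + ENNReal.ofReal (ε / 4) := by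
      calc S ≤ ∑ i ∈ Finset.range n, (edist (f (u' (i + 1))) (f (u' i)) +
            (if i + 1 = i₀ then ENNReal.ofReal (ε / 4) else 0)) := Finset.sum_le_sum hterm
        _ = S' + ∑ i ∈ Finset.range n, (if i + 1 = i₀ then ENNReal.ofReal (ε / 4) else 0) := by
            rw [Finset.sum_add_distrib]
        _ ≤ S' + ENNReal.ofReal (ε / 4) := by
            gcongr
            rcases i₀ with _ | j
            · simp
            · simp only [Nat.succ_eq_add_one, add_left_inj]
              rw [Finset.sum_ite_eq' (Finset.range n) j (fun _ => ENNReal.ofReal (ε / 4))]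
              split <;> simp
    have hS'var : S' ≤ eVariationOn f (Icc d b) := eVariationOn.sum_le (f := f) (n := n) hu'mono hu'mem
    -- combine
    have hsplit : eVariationOn f (Icc x d) + eVariationOn f (Icc d b) = W := by
      have h1 : Icc x b ∩ Icc x d = Icc x d :=
        inter_eq_self_of_subset_right (Icc_subset_Icc le_rfl hdb)
      have h2 : Icc x b ∩ Icc d b = Icc d b :=
        inter_eq_self_of_subset_right (Icc_subset_Icc hxd.le le_rfl)
      have h3 : Icc x b ∩ Icc x b = Icc x b := inter_self _
      have := eVariationOn.Icc_add_Icc f (s := Icc x b) hxd.le hdb ⟨hxd.le, hdb⟩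
      rw [h1, h2, h3] at this
      exact this
    have hfin2 : eVariationOn f (Icc d b) ≠ ⊤ :=
      ne_top_of_le_ne_top hfin (eVariationOn.mono f (Icc_subset_Icc hxd.le le_rfl))
    have hfinal : eVariationOn f (Icc x d) + eVariationOn f (Icc d b) ≤
        ENNReal.ofReal (ε / 2) + eVariationOn f (Icc d b) := by
      rw [hsplit]
      calc W ≤ S + ENNReal.ofReal (ε / 4) := hWS
        _ ≤ (S' + ENNReal.ofReal (ε / 4)) + ENNReal.ofReal (ε / 4) := by gcongr
        _ ≤ (eVariationOn f (Icc d b) + ENNReal.ofReal (ε / 4)) + ENNReal.ofReal (ε / 4) := by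
            gcongr
        _ = ENNReal.ofReal (ε / 4) + ENNReal.ofReal (ε / 4) + eVariationOn f (Icc d b) := by ring
        _ = ENNReal.ofReal (ε / 2) + eVariationOn f (Icc d b) := by
            rw [← ENNReal.ofReal_add (by positivity) (by positivity)]
            congr 1
            ring
    have : eVariationOn f (Icc x d) ≤ ENNReal.ofReal (ε / 2) :=
      ENNReal.le_of_add_le_add_right hfin2 hfinal
    exact ⟨d, hxd, hdb, this.trans (ENNReal.ofReal_le_ofReal (by linarith))⟩

lemma reflect_var (f : ℝ → X) (a x : ℝ) {c d : ℝ} (hcd : c ≤ d) :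
    eVariationOn (fun y => f (a + x - y)) (Icc c d) = eVariationOn f (Icc (a + x - d) (a + x - c)) := by
  have h := eVariationOn.comp_eq_of_antitoneOn f (t := Icc c d) (fun y => a + x - y)
    (fun p _ q _ hpq => by dsimp; linarith)
  rw [show (fun y => f (a + x - y)) = f ∘ (fun y => a + x - y) from rfl, h]
  congr 1
  rw [show (fun y : ℝ => a + x - y) = (fun y => (a + x) - y) from rfl, Set.image_const_sub_Icc]

lemma exists_left_small_var (f : ℝ → X) (hf : Continuous f) {a x : ℝ} (hax : a < x)
    (hfin : eVariationOn f (Icc a x) ≠ ⊤) {ε : ℝ} (hε : 0 < ε) :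
    ∃ d, a ≤ d ∧ d < x ∧ eVariationOn f (Icc d x) ≤ ENNReal.ofReal ε := by
  set g : ℝ → X := fun y => f (a + x - y) with hg
  have hgc : Continuous g := hf.comp (by continuity)
  have hvar : eVariationOn g (Icc a x) = eVariationOn f (Icc a x) := by
    rw [reflect_var f a x hax.le]
    have e1 : a + x - x = a := by ring
    have e2 : a + x - a = x := by ring
    rw [e1, e2]
  have hgfin : eVariationOn g (Icc a x) ≠ ⊤ := by rw [hvar]; exact hfin
  obtain ⟨e, hae, hex, hvar2⟩ := exists_right_small_var g hgc hax hgfin hε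
  refine ⟨a + x - e, by linarith, by linarith, ?_⟩
  rw [reflect_var f a x hae.le] at hvar2
  convert hvar2 using 3 <;> ring

lemma exists_uniform_partition (f : ℝ → X) (hf : Continuous f)
    (hfin : eVariationOn f (Icc 0 1) ≠ ⊤) {ε : ℝ} (hε : 0 < ε) :
    ∃ n : ℕ, 0 < n ∧ ∀ i : ℕ, i < n →
      eVariationOn f (Icc ((i : ℝ) / n) (((i : ℝ) + 1) / n)) ≤ ENNReal.ofReal ε := by
  have hpfin : ∀ {c d : ℝ}, 0 ≤ c → d ≤ 1 → eVariationOn f (Icc c d) ≠ ⊤ := by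
    intro c d hc hd
    exact ne_top_of_le_ne_top hfin (eVariationOn.mono f (fun y hy => ⟨hc.trans hy.1, hy.2.trans hd⟩))
  set v : ℝ → ℝ := fun t => (eVariationOn f (Icc 0 t)).toReal with hv
  have hvdiff : ∀ {c d : ℝ}, 0 ≤ c → c ≤ d → d ≤ 1 →
      v d - v c = (eVariationOn f (Icc c d)).toReal := by
    intro c d h0c hcd hd1
    have h1 : Icc (0:ℝ) d ∩ Icc 0 c = Icc 0 c :=
      inter_eq_self_of_subset_right (Icc_subset_Icc le_rfl hcd)
    have h2 : Icc (0:ℝ) d ∩ Icc c d = Icc c d :=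
      inter_eq_self_of_subset_right (Icc_subset_Icc h0c le_rfl)
    have h3 : Icc (0:ℝ) d ∩ Icc 0 d = Icc 0 d := inter_self _
    have := eVariationOn.Icc_add_Icc f (s := Icc 0 d) h0c hcd ⟨h0c, hcd⟩
    rw [h1, h2, h3] at this
    rw [hv]
    dsimp only
    rw [← this, ENNReal.toReal_add (hpfin le_rfl (hcd.trans hd1)) (hpfin h0c hd1)]
    ring
  have hvcont : ContinuousOn v (Icc 0 1) := by
    intro x hx
    rw [Metric.continuousWithinAt_iff]
    intro ε' hε'
    have hε'2 : 0 < ε' / 2 := by positivity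
    -- right bound
    obtain ⟨etaP, hetaP, hR⟩ : ∃ η > 0, ∀ y ∈ Icc (0:ℝ) 1, x ≤ y → y - x < η →
        eVariationOn f (Icc x y) ≤ ENNReal.ofReal (ε' / 2) := by
      by_cases hx1 : x < 1
      · obtain ⟨d, hxd, hd1, hvar⟩ :=
          exists_right_small_var f hf hx1 (hpfin hx.1 le_rfl) hε'2
        exact ⟨d - x, by linarith, fun y _ hxy hyd =>
          le_trans (eVariationOn.mono f (Icc_subset_Icc le_rfl (by linarith))) hvar⟩
      · refine ⟨1, one_pos, fun y hy hxy _ => ?_⟩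
        have hx1' : x = 1 := le_antisymm hx.2 (not_lt.mp hx1)
        have hyx : y = x := le_antisymm (hx1' ▸ hy.2) hxy
        rw [hyx, Icc_self]
        rw [eVariationOn.subsingleton f (subsingleton_singleton)]
        exact zero_le
    -- left bound
    obtain ⟨etaM, hetaM, hL⟩ : ∃ η > 0, ∀ y ∈ Icc (0:ℝ) 1, y ≤ x → x - y < η →
        eVariationOn f (Icc y x) ≤ ENNReal.ofReal (ε' / 2) := by
      by_cases hx0 : 0 < x
      · obtain ⟨d, hd0, hdx, hvar⟩ :=
          exists_left_small_var f hf hx0 (hpfin le_rfl hx.2) hε'2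
        exact ⟨x - d, by linarith, fun y _ hyx hyd =>
          le_trans (eVariationOn.mono f (Icc_subset_Icc (by linarith) le_rfl)) hvar⟩
      · refine ⟨1, one_pos, fun y hy hyx _ => ?_⟩
        have hx0' : x = 0 := le_antisymm (not_lt.mp hx0) hx.1
        have hyx' : y = x := le_antisymm hyx (hx0' ▸ hy.1)
        rw [hyx', Icc_self, eVariationOn.subsingleton f (subsingleton_singleton)]
        exact zero_le
    refine ⟨min etaP etaM, lt_min hetaP hetaM, fun y hy hdist => ?_⟩
    have key : dist (v y) (v x) ≤ ε' / 2 := by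
      rcases le_total x y with hxy | hyx
      · have hd : y - x < etaP := by
          have := abs_lt.mp (by rwa [Real.dist_eq] at hdist)
          have := lt_min_iff.mp hdist
          rw [Real.dist_eq] at this
          have := abs_lt.mp this.1
          linarith [this.1, this.2]
        have hvar := hR y hy hxy hd
        have heq := hvdiff hx.1 hxy hy.2
        rw [Real.dist_eq, abs_of_nonneg (by rw [heq]; positivity), heq]
        calc (eVariationOn f (Icc x y)).toReal
            ≤ (ENNReal.ofReal (ε' / 2)).toReal := ENNReal.toReal_mono ENNReal.ofReal_ne_top hvar
          _ = ε' / 2 := ENNReal.toReal_ofReal hε'2.le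
      · have hd : x - y < etaM := by
          have := lt_min_iff.mp hdist
          rw [Real.dist_eq] at this
          have h2 := abs_lt.mp this.2
          linarith [h2.1, h2.2]
        have hvar := hL y hy hyx hd
        have heq := hvdiff hy.1 hyx hx.2
        rw [Real.dist_eq, abs_sub_comm, abs_of_nonneg (by rw [heq]; positivity),
          show v x - v y = (eVariationOn f (Icc y x)).toReal from heq]
        calc (eVariationOn f (Icc y x)).toReal
            ≤ (ENNReal.ofReal (ε' / 2)).toReal := ENNReal.toReal_mono ENNReal.ofReal_ne_top hvar
          _ = ε' / 2 := ENNReal.toReal_ofReal hε'2.le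
    linarith [key, hε'2]
  -- uniform continuity
  have huc := isCompact_Icc.uniformContinuousOn_of_continuous hvcont
  obtain ⟨η, hη, huc'⟩ := Metric.uniformContinuousOn_iff.mp huc ε hε
  set n : ℕ := ⌈1 / η⌉₊ + 1 with hn
  have hn0 : 0 < n := Nat.succ_pos _
  have hn0' : (0:ℝ) < n := by exact_mod_cast hn0
  have hinv : (1:ℝ) / n < η := by
    rw [div_lt_iff₀ hn0']
    have h1 : (1:ℝ) / η ≤ ⌈1 / η⌉₊ := Nat.le_ceil _
    have h2 : (⌈1 / η⌉₊ : ℝ) < n := by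
      rw [hn]; push_cast; linarith
    calc (1:ℝ) = η * (1/η) := by field_simp
      _ < η * n := by
        apply mul_lt_mul_of_pos_left _ hη
        linarith
  refine ⟨n, hn0, fun i hi => ?_⟩
  have hc0 : (0:ℝ) ≤ (i:ℝ)/n := by positivity
  have hcd : (i:ℝ)/n ≤ ((i:ℝ)+1)/n := by
    gcongr
    linarith
  have hd1 : ((i:ℝ)+1)/n ≤ 1 := by
    rw [div_le_one hn0']
    have : (i:ℝ) + 1 ≤ n := by exact_mod_cast hi
    linarith
  have hmemc : (i:ℝ)/n ∈ Icc (0:ℝ) 1 := ⟨hc0, hcd.trans hd1⟩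
  have hmemd : ((i:ℝ)+1)/n ∈ Icc (0:ℝ) 1 := ⟨hc0.trans hcd, hd1⟩
  have hdist : dist (((i:ℝ)+1)/n) ((i:ℝ)/n) < η := by
    rw [Real.dist_eq, div_sub_div_same, show (i:ℝ) + 1 - i = 1 by ring, abs_of_nonneg (by positivity)]
    exact hinv
  have := huc' _ hmemd _ hmemc hdist
  rw [Real.dist_eq, hvdiff hc0 hcd hd1, abs_of_nonneg ENNReal.toReal_nonneg] at this
  rw [ENNReal.le_ofReal_iff_toReal_le (hpfin hc0 hd1) hε.le]
  exact this.le

/-- The path `s ↦ f ((1-s)a + sb)`, with designated endpoints. -/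
noncomputable def sub2 (f : ℝ → X) (hf : Continuous f) (a b : ℝ) {x y : X}
    (hx : f a = x) (hy : f b = y) : Path x y where
  toFun := fun s => f ((1 - (s:ℝ)) * a + (s:ℝ) * b)
  continuous_toFun := by fun_prop
  source' := by simpa using hx
  target' := by simpa using hy

@[simp] lemma sub2_apply (f : ℝ → X) (hf : Continuous f) (a b : ℝ) {x y : X}
    (hx : f a = x) (hy : f b = y) (s : unitInterval) :
    sub2 f hf a b hx hy s = f ((1 - (s:ℝ)) * a + (s:ℝ) * b) := rfl

/-- Two paths given by `f` composed with real-valued parametrizations with equal endpoints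
are homotopic (by convexity of `ℝ`). -/
lemma homotopic_of_real_param {x y : X} (f : ℝ → X) (hf : Continuous f)
    (u w : unitInterval → ℝ) (hu : Continuous u) (hw : Continuous w)
    (h0 : u 0 = w 0) (h1 : u 1 = w 1) (P Q : Path x y)
    (hP : ∀ s, P s = f (u s)) (hQ : ∀ s, Q s = f (w s)) : P.Homotopic Q := by
  refine ⟨⟨⟨⟨fun st => f ((1 - (st.1 : ℝ)) * u st.2 + (st.1 : ℝ) * w st.2), by fun_prop⟩,
    ?_, ?_⟩, ?_⟩⟩
  · intro t
    simp [hP t]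
  · intro t
    simp [hQ t]
  · intro s t ht
    simp only [Set.mem_insert_iff, Set.mem_singleton_iff] at ht
    rcases ht with rfl | rfl
    · show f _ = P 0
      rw [hP 0]
      have : (1 - (s:ℝ)) * u 0 + (s:ℝ) * w 0 = u 0 := by rw [h0]; ring
      simp only [ContinuousMap.coe_mk, this]
    · show f _ = P 1
      rw [hP 1]
      have : (1 - (s:ℝ)) * u 1 + (s:ℝ) * w 1 = u 1 := by rw [h1]; ring
      simp only [ContinuousMap.coe_mk, this]

/-- Concatenation of consecutive `sub2` paths is homotopic to the single `sub2` path. -/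
lemma sub2_trans_sub2_homotopic (f : ℝ → X) (hf : Continuous f) (a b c : ℝ) {x y z : X}
    (hx : f a = x) (hy : f b = y) (hz : f c = z) :
    ((sub2 f hf a b hx hy).trans (sub2 f hf b c hy hz)).Homotopic (sub2 f hf a c hx hz) := by
  classical
  set U : ℝ → ℝ := fun r =>
    if r ≤ 1/2 then (1 - 2*r)*a + (2*r)*b else (1-(2*r-1))*b + (2*r-1)*c with hU
  have hUc : Continuous U := by
    apply Continuous.if_le (by fun_prop) (by fun_prop) continuous_id continuous_const
    intro r hr
    simp only [id_eq] at hr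
    subst hr
    norm_num
  apply homotopic_of_real_param f hf (fun s => U s) (fun s => (1 - (s:ℝ))*a + (s:ℝ)*c)
    (hUc.comp continuous_subtype_val) (by fun_prop)
  · show U 0 = _
    rw [hU]
    norm_num
  · show U 1 = _
    rw [hU]
    norm_num
  · intro s
    rw [Path.trans_apply]
    split
    · next h =>
      rw [hU]
      simp only [sub2_apply]
      rw [if_pos h]
    · next h =>
      rw [hU]
      simp only [sub2_apply]
      rw [if_neg h]
  · intro s
    simp

lemma pathLength_sub2 (f : ℝ → X) (hf : Continuous f) {a b : ℝ} (hab : a ≤ b) {x y : X}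
    (hx : f a = x) (hy : f b = y) :
    pathLength (sub2 f hf a b hx hy) = eVariationOn f (Icc a b) := by
  have : (fun t : unitInterval => (sub2 f hf a b hx hy) t) =
      f ∘ (fun t : unitInterval => (1 - (t:ℝ)) * a + (t:ℝ) * b) := rfl
  rw [pathLength, this, eVariationOn.comp_eq_of_monotoneOn f _ ?mono]
  case mono =>
    intro s _ t _ hst
    have hs := s.2.1
    have ht := t.2.2
    dsimp
    nlinarith [sub_nonneg.mpr (Subtype.coe_le_coe.mpr hst)]
  congr 1
  have himg : (fun t : unitInterval => (1 - (t:ℝ)) * a + (t:ℝ) * b) '' univ =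
      (fun θ : ℝ => (1 - θ) * a + θ * b) '' Icc 0 1 := by
    rw [image_univ]
    ext z
    constructor
    · rintro ⟨t, rfl⟩
      exact ⟨(t:ℝ), t.2, rfl⟩
    · rintro ⟨θ, hθ, rfl⟩
      exact ⟨⟨θ, hθ⟩, rfl⟩
  rw [himg, ← segment_eq_Icc hab, segment_eq_image ℝ a b]
  simp [smul_eq_mul]

lemma pathLength_symm {x y : X} (P : Path x y) : pathLength P.symm = pathLength P := by
  have : (fun t : unitInterval => P.symm t) =
      (fun t : unitInterval => P t) ∘ unitInterval.symm := by
    funext t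
    exact P.symm_apply t
  rw [pathLength, this, eVariationOn.comp_eq_of_antitoneOn _ _ ?anti]
  case anti =>
    intro s _ t _ hst
    exact unitInterval.symm_le_symm.mpr hst
  rw [pathLength]
  congr 1
  rw [image_univ]
  exact (unitInterval.symm_involutive.surjective).range_eq

lemma pathLength_trans_le {x y z : X} (P : Path x y) (Q : Path y z) :
    pathLength (P.trans Q) ≤ pathLength P + pathLength Q := by
  have hhalf : (1/2 : ℝ) ∈ I := by norm_num
  have huniv : (univ : Set unitInterval) = Iic ⟨1/2, hhalf⟩ ∪ Ici ⟨1/2, hhalf⟩ := by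
    rw [Iic_union_Ici]
  rw [pathLength, huniv,
    eVariationOn.union _ (isGreatest_Iic) (isLeast_Ici)]
  gcongr
  · -- variation on first half
    have heq : EqOn (fun t : unitInterval => (P.trans Q) t)
        ((fun t : unitInterval => P t) ∘ (fun t : unitInterval =>
          Set.projIcc (0:ℝ) 1 zero_le_one (2 * (t:ℝ)))) (Iic ⟨1/2, hhalf⟩) := by
      intro t ht
      simp only [Function.comp_apply]
      rw [Path.trans_apply]
      have ht' : (t:ℝ) ≤ 1/2 := ht
      rw [dif_pos ht']
      congr 1
      have ht0 := t.2.1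
      rw [Set.projIcc_of_mem zero_le_one ⟨by linarith, by linarith⟩]
    rw [eVariationOn.eq_of_eqOn heq]
    apply eVariationOn.comp_le_of_monotoneOn
    · intro s _ t _ hst
      exact monotone_projIcc zero_le_one (by
        have : (s:ℝ) ≤ t := hst
        linarith)
    · exact fun t _ => mem_univ _
  · -- variation on second half
    have heq : EqOn (fun t : unitInterval => (P.trans Q) t)
        ((fun t : unitInterval => Q t) ∘ (fun t : unitInterval =>
          Set.projIcc (0:ℝ) 1 zero_le_one (2 * (t:ℝ) - 1))) (Ici ⟨1/2, hhalf⟩) := by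
      intro t ht
      simp only [Function.comp_apply]
      rw [Path.trans_apply]
      have ht' : (1/2 : ℝ) ≤ (t:ℝ) := ht
      by_cases h : (t:ℝ) ≤ 1/2
      · have htt : (t:ℝ) = 1/2 := le_antisymm h ht'
        rw [dif_pos h,
          Set.projIcc_of_mem zero_le_one (show 2*(t:ℝ)-1 ∈ Icc (0:ℝ) 1 by rw [htt]; norm_num)]
        rw [← Path.extend_extends' P, ← Path.extend_extends' Q]
        show P.extend (2*(t:ℝ)) = Q.extend (2*(t:ℝ)-1)
        rw [htt]
        norm_num
      · rw [dif_neg h]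
        congr 1
        have ht2 := t.2.2
        rw [Set.projIcc_of_mem zero_le_one ⟨by linarith [not_le.mp h], by linarith⟩]
    rw [eVariationOn.eq_of_eqOn heq]
    apply eVariationOn.comp_le_of_monotoneOn
    · intro s _ t _ hst
      exact monotone_projIcc zero_le_one (by
        have : (s:ℝ) ≤ t := hst
        linarith)
    · exact fun t _ => mem_univ _

lemma pathLength_of_geodesic {x y : X} (g : Path x y)
    (hg : ∀ s t : unitInterval, dist (g s) (g t) = |(s:ℝ) - (t:ℝ)| * dist x y) :
    pathLength g ≤ ENNReal.ofReal (dist x y) := by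
  apply iSup_le
  rintro ⟨n, u, hu, -⟩
  have key : ∀ i : ℕ, edist (g (u (i+1))) (g (u i)) =
      ENNReal.ofReal ((u (i+1) : ℝ) * dist x y - (u i : ℝ) * dist x y) := by
    intro i
    rw [edist_dist, hg, abs_of_nonneg (by
      have : (u i : ℝ) ≤ u (i+1) := hu (Nat.le_succ i)
      linarith)]
    congr 1
    ring
  calc ∑ i ∈ Finset.range n, edist (g (u (i+1))) (g (u i))
      = ∑ i ∈ Finset.range n,
        ENNReal.ofReal ((u (i+1) : ℝ) * dist x y - (u i : ℝ) * dist x y) := by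
        exact Finset.sum_congr rfl fun i _ => key i
    _ = ENNReal.ofReal (∑ i ∈ Finset.range n,
        ((u (i+1) : ℝ) * dist x y - (u i : ℝ) * dist x y)) := by
        rw [ENNReal.ofReal_sum_of_nonneg]
        intro i _
        have : (u i : ℝ) ≤ u (i+1) := hu (Nat.le_succ i)
        nlinarith [dist_nonneg (x := x) (y := y)]
    _ = ENNReal.ofReal (((u n : ℝ)) * dist x y - ((u 0 : ℝ)) * dist x y) := by
        rw [Finset.sum_range_sub (fun i => (u i : ℝ) * dist x y)]
    _ ≤ ENNReal.ofReal (dist x y) := by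
        apply ENNReal.ofReal_le_ofReal
        have h1 := (u n).2.2
        have h2 := (u 0).2.1
        nlinarith [dist_nonneg (x := x) (y := y)]


section GroupAlgebra

variable {Y : Type*} [TopologicalSpace Y] {p : Y}

lemma FundamentalGroup.ofLoop_hom {x : Y} (q : Path.Homotopic.Quotient x x) :
    FundamentalGroup.toPath (FundamentalGroup.ofLoop q) = q := rfl

lemma basedLoopClass_congr {P Q : Path p p} (h : P.Homotopic Q) :
    basedLoopClass P = basedLoopClass Q := by
  show (⟦P⟧ : Path.Homotopic.Quotient p p) = ⟦Q⟧
  exact Quotient.sound h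

lemma basedLoopClass_trans (P Q : Path p p) :
    basedLoopClass (P.trans Q) = basedLoopClass Q * basedLoopClass P := by
  rw [FundamentalGroup.mul_def]
  exact Path.Homotopic.Quotient.mk_trans P Q

/-- The key cancellation: `(A (S B⁻¹)) (B R) ≃ A (S R)`. -/
lemma trans_symm_cancel_homotopic {x₀ x₁ x₂ x₃ x₄ : Y}
    (A : Path x₀ x₁) (S : Path x₁ x₂) (B : Path x₃ x₂) (R : Path x₂ x₄) :
    ((A.trans (S.trans B.symm)).trans (B.trans R)).Homotopic (A.trans (S.trans R)) := by
  apply Quotient.exact (s := Path.Homotopic.setoid x₀ x₄)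
  let a : (⟨x₀⟩ : FundamentalGroupoid Y) ⟶ ⟨x₁⟩ := ⟦A⟧
  let sm : (⟨x₁⟩ : FundamentalGroupoid Y) ⟶ ⟨x₂⟩ := ⟦S⟧
  let b : (⟨x₃⟩ : FundamentalGroupoid Y) ⟶ ⟨x₂⟩ := ⟦B⟧
  let b' : (⟨x₂⟩ : FundamentalGroupoid Y) ⟶ ⟨x₃⟩ := ⟦B.symm⟧
  let r : (⟨x₂⟩ : FundamentalGroupoid Y) ⟶ ⟨x₄⟩ := ⟦R⟧
  have hBB : b' ≫ b = 𝟙 (⟨x₂⟩ : FundamentalGroupoid Y) := by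
    show Path.Homotopic.Quotient.mk (B.symm.trans B) = Path.Homotopic.Quotient.mk (Path.refl x₂)
    exact Quotient.sound ⟨(Path.Homotopy.reflSymmTrans B).symm⟩
  show (⟦(A.trans (S.trans B.symm)).trans (B.trans R)⟧ :
      (⟨x₀⟩ : FundamentalGroupoid Y) ⟶ ⟨x₄⟩) = ⟦A.trans (S.trans R)⟧
  have e1 : (⟦(A.trans (S.trans B.symm)).trans (B.trans R)⟧ :
        (⟨x₀⟩ : FundamentalGroupoid Y) ⟶ ⟨x₄⟩)
      = (a ≫ (sm ≫ b')) ≫ (b ≫ r) := by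
    show _ = CategoryTheory.CategoryStruct.comp
      (CategoryTheory.CategoryStruct.comp a (CategoryTheory.CategoryStruct.comp sm b'))
      (CategoryTheory.CategoryStruct.comp b r)
    rfl
  have e2 : (⟦A.trans (S.trans R)⟧ : (⟨x₀⟩ : FundamentalGroupoid Y) ⟶ ⟨x₄⟩)
      = a ≫ (sm ≫ r) := by
    show _ = CategoryTheory.CategoryStruct.comp a (CategoryTheory.CategoryStruct.comp sm r)
    rfl
  rw [e1, e2]
  rw [CategoryTheory.Category.assoc, CategoryTheory.Category.assoc]
  congr 1
  congr 1
  rw [← CategoryTheory.Category.assoc, hBB, CategoryTheory.Category.id_comp]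

end GroupAlgebra

end AuxiliaryLemmas

/-- In a geodesic space, the homotopy class of any rectifiable loop
based at `p` contained in `B(p, δ)` is a finite product of classes of loops based at
`p` of length `< 2δ`. -/
theorem statement_12 {X : Type*} [MetricSpace X] (hX : IsGeodesicSpace X)
    (p : X) (δ : ℝ) (hδ : 0 < δ)
    (γ : Path p p) (hrect : pathLength γ ≠ ⊤)
    (him : ∀ t : unitInterval, γ t ∈ Metric.ball p δ) :
    basedLoopClass γ ∈ Subgroup.closure
      {x : FundamentalGroup X p | ∃ γ' : Path p p,
        pathLength γ' < ENNReal.ofReal (2 * δ) ∧ x = basedLoopClass γ'} := by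
  classical
  set f : ℝ → X := ⇑γ.extend with hfdef
  have hfc : Continuous f := γ.continuous_extend
  -- transfer of rectifiability to `f` on `[0,1]`
  have hcomp : eVariationOn f (Icc 0 1) = pathLength γ := by
    have hfeq : f = (fun t : unitInterval => γ t) ∘ (Set.projIcc (0:ℝ) 1 zero_le_one) := rfl
    rw [hfeq]
    rw [eVariationOn.comp_eq_of_monotoneOn (fun t : unitInterval => γ t)
      (Set.projIcc (0:ℝ) 1 zero_le_one) ((monotone_projIcc zero_le_one).monotoneOn _), pathLength]
    congr 1
    ext s
    simp only [mem_image, mem_univ, iff_true]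
    exact ⟨(s : ℝ), s.2, by simp⟩
  have hfin : eVariationOn f (Icc 0 1) ≠ ⊤ := by rw [hcomp]; exact hrect
  -- the maximal distance δ' < δ
  obtain ⟨tm, -, htm⟩ :=
    isCompact_univ.exists_isMaxOn univ_nonempty
      ((continuous_const.dist γ.continuous).continuousOn :
        ContinuousOn (fun s : unitInterval => dist p (γ s)) univ)
  set δ' : ℝ := dist p (γ tm) with hδ'def
  have hδ'0 : 0 ≤ δ' := dist_nonneg
  have hδ'δ : δ' < δ := by
    have := him tm
    rwa [Metric.mem_ball, dist_comm] at this
  have hballf : ∀ r : ℝ, r ∈ Icc (0:ℝ) 1 → dist p (f r) ≤ δ' := by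
    intro r hr
    rw [hfdef, Path.extend_apply γ hr]
    exact htm (mem_univ _)
  set ε : ℝ := δ - δ' with hεdef
  have hε : 0 < ε := by rw [hεdef]; linarith
  obtain ⟨n, hn0, hpieces⟩ := exists_uniform_partition f hfc hfin hε
  have hn0' : (0:ℝ) < n := by exact_mod_cast hn0
  set t : ℕ → ℝ := fun i => (i : ℝ) / n with htdef
  have ht0 : t 0 = 0 := by simp [htdef]
  have htn : t n = 1 := by rw [htdef]; exact div_self (ne_of_gt hn0')
  have htmono : ∀ i : ℕ, t i ≤ t (i+1) := by
    intro i
    show (i:ℝ)/n ≤ ((i+1:ℕ):ℝ)/n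
    push_cast
    gcongr
    linarith
  have htmem : ∀ i : ℕ, i ≤ n → t i ∈ Icc (0:ℝ) 1 := by
    intro i hi
    rw [htdef]
    constructor
    · positivity
    · rw [div_le_one hn0']
      exact_mod_cast hi
  have hp1 : f 1 = p := γ.extend_one
  have hpiece' : ∀ i : ℕ, i < n →
      eVariationOn f (Icc (t i) (t (i+1))) ≤ ENNReal.ofReal ε := by
    intro i hi
    have : t (i+1) = ((i:ℝ) + 1)/n := by rw [htdef]; push_cast; ring
    rw [this]
    exact hpieces i hi
  have h2δpos : (0:ℝ) < 2 * δ := by linarith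
  -- the main downward induction
  have claim : ∀ k i : ℕ, i + k = n → ∀ G : Path p (f (t i)),
      pathLength G ≤ ENNReal.ofReal δ' →
      basedLoopClass (G.trans (sub2 f hfc (t i) 1 rfl hp1)) ∈ Subgroup.closure
        {x : FundamentalGroup X p | ∃ γ' : Path p p,
          pathLength γ' < ENNReal.ofReal (2 * δ) ∧ x = basedLoopClass γ'} := by
    intro k
    induction k with
    | zero =>
      intro i hik G hG
      have hin : i = n := by omega
      apply Subgroup.subset_closure
      refine ⟨_, ?_, rfl⟩
      have hti : t i = 1 := by rw [hin, htn]
      have hrest : pathLength (sub2 f hfc (t i) 1 rfl hp1) = 0 := by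
        rw [pathLength_sub2 f hfc hti.le]
        rw [hti, Icc_self]
        exact eVariationOn.subsingleton f subsingleton_singleton
      calc pathLength (G.trans (sub2 f hfc (t i) 1 rfl hp1))
          ≤ pathLength G + pathLength (sub2 f hfc (t i) 1 rfl hp1) := pathLength_trans_le _ _
        _ = pathLength G := by rw [hrest, add_zero]
        _ ≤ ENNReal.ofReal δ' := hG
        _ < ENNReal.ofReal (2 * δ) := by
            rw [ENNReal.ofReal_lt_ofReal_iff h2δpos]
            linarith
    | succ k ih =>
      intro i hik G hG
      have hi_lt : i < n := by omega
      obtain ⟨g, hgdist⟩ := hX p (f (t (i+1)))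
      have hglen : pathLength g ≤ ENNReal.ofReal δ' :=
        (pathLength_of_geodesic g hgdist).trans
          (ENNReal.ofReal_le_ofReal (hballf _ (htmem (i+1) (by omega))))
      set sp := sub2 f hfc (t i) (t (i+1)) rfl rfl with hspdef
      set α := G.trans (sp.trans g.symm) with hαdef
      have hsplen : pathLength sp ≤ ENNReal.ofReal ε := by
        rw [hspdef, pathLength_sub2 f hfc (htmono i)]
        exact hpiece' i hi_lt
      have hα_len : pathLength α < ENNReal.ofReal (2 * δ) := by
        calc pathLength α
            ≤ pathLength G + pathLength (sp.trans g.symm) := pathLength_trans_le _ _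
          _ ≤ pathLength G + (pathLength sp + pathLength g.symm) := by
              gcongr
              exact pathLength_trans_le _ _
          _ ≤ ENNReal.ofReal δ' + (ENNReal.ofReal ε + ENNReal.ofReal δ') := by
              gcongr
              rw [pathLength_symm]
              exact hglen
          _ = ENNReal.ofReal (δ' + (ε + δ')) := by
              rw [ENNReal.ofReal_add hδ'0 (by positivity), ENNReal.ofReal_add hε.le hδ'0]
          _ < ENNReal.ofReal (2 * δ) := by
              rw [ENNReal.ofReal_lt_ofReal_iff h2δpos, hεdef]
              linarith
      have hmemα : basedLoopClass α ∈ Subgroup.closure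
          {x : FundamentalGroup X p | ∃ γ' : Path p p,
            pathLength γ' < ENNReal.ofReal (2 * δ) ∧ x = basedLoopClass γ'} :=
        Subgroup.subset_closure ⟨α, hα_len, rfl⟩
      have hmemrest := ih (i+1) (by omega) g hglen
      have hhom : (α.trans (g.trans (sub2 f hfc (t (i+1)) 1 rfl hp1))).Homotopic
          (G.trans (sub2 f hfc (t i) 1 rfl hp1)) := by
        refine Path.Homotopic.trans
          (trans_symm_cancel_homotopic G sp g (sub2 f hfc (t (i+1)) 1 rfl hp1)) ?_
        exact Path.Homotopic.hcomp (Path.Homotopic.refl G)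
          (sub2_trans_sub2_homotopic f hfc (t i) (t (i+1)) 1 rfl rfl hp1)
      have heq : basedLoopClass (G.trans (sub2 f hfc (t i) 1 rfl hp1)) =
          basedLoopClass (g.trans (sub2 f hfc (t (i+1)) 1 rfl hp1)) * basedLoopClass α := by
        rw [← basedLoopClass_trans]
        exact (basedLoopClass_congr hhom).symm
      rw [heq]
      exact mul_mem hmemrest hmemα
  -- conclude
  have h00 : f (t 0) = p := by rw [ht0]; exact γ.extend_zero
  have hG0len : pathLength (sub2 f hfc (t 0) (t 0) h00 rfl) ≤ ENNReal.ofReal δ' := by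
    rw [pathLength_sub2 f hfc le_rfl, Icc_self,
      eVariationOn.subsingleton f subsingleton_singleton]
    exact zero_le
  have hmain := claim n 0 (by omega) (sub2 f hfc (t 0) (t 0) h00 rfl) hG0len
  have hγhom : ((sub2 f hfc (t 0) (t 0) h00 rfl).trans
      (sub2 f hfc (t 0) 1 rfl hp1)).Homotopic γ := by
    refine Path.Homotopic.trans
      (sub2_trans_sub2_homotopic f hfc (t 0) (t 0) 1 h00 rfl hp1) ?_
    refine homotopic_of_real_param f hfc
      (fun s : unitInterval => (1 - (s:ℝ)) * (t 0) + (s:ℝ) * 1)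
      (fun s : unitInterval => (s:ℝ)) (by fun_prop) (by fun_prop) ?_ ?_ _ _
      (fun s => rfl) (fun s => (γ.extend_extends' s).symm)
    · simp [ht0]
    · simp
  rw [show basedLoopClass γ = basedLoopClass ((sub2 f hfc (t 0) (t 0) h00 rfl).trans
      (sub2 f hfc (t 0) 1 rfl hp1)) from (basedLoopClass_congr hγhom).symm]
  exact hmain
end
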